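/- arXiv:2102.03225 — 2 statements merged into one kernel-verified Lean document; each statement's English description precedes it below -/
import Mathlib

section
/- For every integer n ≥ 2 and every integer k with 2 ≤ k ≤ n, the number of type-B permutation tableaux of size n whose (k-1)-th and k-th border steps are both west steps equals (k/n - 3/(2n) + (n-k+1)^2/(4n(n-1)))·|B_n|; equivalently, for a uniformly random type-B permutation tableau of size n, the probability that steps k-1 and k are both west steps is k/n - 3/(2n) + (n-k+1)^2/(4n(n-1)). -/
/-- A type-B permutation tableau of size `n`, encoded via its border steps and filling.

Border steps are indexed by `Fin n` (index `i` is the `(i+1)`-th step from the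
northeast corner); `west i = true` means the `(i+1)`-th step is a west step
(giving a column) and `west i = false` means it is a south step (giving a row
of the original, unshifted diagram).

Rows of the shifted diagram are also indexed by `Fin n`: a south step `r` indexes
the corresponding original row, and a west step `r` indexes the inserted diagonal
row whose diagonal cell lies in the column of `r`.  The cell in row `r` and the
column of a west step `c` exists iff (`r` is south and `r < c`) or (`r` is west
and `r ≤ c`); in particular the diagonal cell of the column of `c` is `(c, c)`.
Columns are ordered left-to-right by decreasing step index, rows top-to-bottom as:
diagonal rows by decreasing step index, then original rows by increasing step index.

`filling r c = true` means the cell `(r, c)` contains a 1; `filling` is `false`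
outside the cells of the diagram (field `support`).  The fields `col_one`,
`no_bad_zero` and `diag_zero` are the three defining conditions of a type-B
permutation tableau. -/
structure TypeBTableau (n : ℕ) where
  west : Fin n → Bool
  filling : Fin n → Fin n → Bool
  support : ∀ r c : Fin n, filling r c = true →
    west c = true ∧ ((west r = false ∧ (r : ℕ) < (c : ℕ)) ∨ (west r = true ∧ (r : ℕ) ≤ (c : ℕ)))
  col_one : ∀ c : Fin n, west c = true → ∃ r : Fin n, filling r c = true
  no_bad_zero : ∀ r c : Fin n,
    (west c = true ∧ ((west r = false ∧ (r : ℕ) < (c : ℕ)) ∨ (west r = true ∧ (r : ℕ) ≤ (c : ℕ)))) →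
    filling r c = false →
    ¬((∃ r' : Fin n,
        ((west r' = true ∧ west r = false) ∨
         (west r' = true ∧ west r = true ∧ (r : ℕ) < (r' : ℕ)) ∨
         (west r' = false ∧ west r = false ∧ (r' : ℕ) < (r : ℕ))) ∧
        filling r' c = true) ∧
      (∃ c' : Fin n, (c : ℕ) < (c' : ℕ) ∧ filling r c' = true))
  diag_zero : ∀ j : Fin n, west j = true → filling j j = false →
    ∀ c : Fin n, filling j c = false

namespace TypeBTableau

noncomputable instance instFintype {n : ℕ} : Fintype (TypeBTableau n) :=
  Fintype.ofInjective (fun T => (T.west, T.filling)) (by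
    rintro ⟨w1, f1, _, _, _, _⟩ ⟨w2, f2, _, _, _, _⟩ h
    simp only [Prod.mk.injEq] at h
    obtain ⟨h1, h2⟩ := h
    subst h1; subst h2; rfl)

end TypeBTableau

open Finset

namespace TypeBAux
open Finset TypeBTableau

variable {n : ℕ}

/-- The cell `(r,c)` exists in the diagram with border word `w`. -/
def cellP (w : Fin n → Bool) (r c : Fin n) : Prop :=
  w c = true ∧ ((w r = false ∧ (r : ℕ) < (c : ℕ)) ∨ (w r = true ∧ (r : ℕ) ≤ (c : ℕ)))

/-- Row `r'` is strictly above row `r`. -/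
def aboveP (w : Fin n → Bool) (r' r : Fin n) : Prop :=
  (w r' = true ∧ w r = false) ∨ (w r' = true ∧ w r = true ∧ (r : ℕ) < (r' : ℕ)) ∨
    (w r' = false ∧ w r = false ∧ (r' : ℕ) < (r : ℕ))

/-- Row `r` is unrestricted. -/
def unres (T : TypeBTableau n) (r : Fin n) : Prop :=
  (T.west r = true → T.filling r r = true) ∧
  ∀ c, cellP T.west r c → T.filling r c = false →
    ¬ ∃ r', aboveP T.west r' r ∧ T.filling r' c = true

/-- Numerical key realizing the vertical order on rows. -/
def key (w : Fin n → Bool) (r : Fin n) : ℕ :=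
  if w r = true then n + 1 + (r : ℕ) else n - (r : ℕ)

lemma key_inj (w : Fin n → Bool) : Function.Injective (key w) := by
  intro r r' h
  have hr := r.isLt; have hr' := r'.isLt
  unfold key at h
  by_cases h1 : w r = true <;> by_cases h2 : w r' = true <;>
    simp [h1, h2] at h <;> omega

lemma aboveP_iff_key (w : Fin n → Bool) (r' r : Fin n) :
    aboveP w r' r ↔ key w r < key w r' := by
  have hr := r.isLt; have hr' := r'.isLt
  unfold aboveP key
  by_cases h1 : w r' = true <;> by_cases h2 : w r = true <;>
    simp [h1, h2] <;> omega

open scoped Classical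

/-- Number of unrestricted rows. -/
noncomputable def U (T : TypeBTableau n) : ℕ :=
  (Finset.univ.filter (unres T)).card

/-- Restriction: delete the last border step. -/
def restrict (T : TypeBTableau (n + 1)) : TypeBTableau n where
  west r := T.west r.castSucc
  filling r c := T.filling r.castSucc c.castSucc
  support r c h := by
    have := T.support r.castSucc c.castSucc h
    simpa using this
  col_one c hc := by
    obtain ⟨r, hr⟩ := T.col_one c.castSucc hc
    have hne : r ≠ Fin.last n := by
      rintro rfl
      have := T.support _ _ hr
      simp [Fin.last] at this
      omega
    refine ⟨r.castPred hne, ?_⟩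
    simpa [Fin.castSucc_castPred] using hr
  no_bad_zero r c hcell h0 := by
    rintro ⟨⟨r', ha, h1⟩, ⟨c', hlt, h2⟩⟩
    refine T.no_bad_zero r.castSucc c.castSucc (by simpa using hcell) h0
      ⟨⟨r'.castSucc, by simpa using ha, h1⟩, ⟨c'.castSucc, by simpa using hlt, h2⟩⟩
  diag_zero j hj h0 c := T.diag_zero j.castSucc hj h0 c.castSucc

/-- The filling of a glued tableau. -/
def glueFill (F : Fin n → Fin n → Bool) (f : Fin (n + 1) → Bool) :
    Fin (n + 1) → Fin (n + 1) → Bool := fun r c =>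
  if hc : c = Fin.last n then f r
  else if hr : r = Fin.last n then false
  else F (r.castPred hr) (c.castPred hc)

/-- Validity of a new-column filling. -/
def Valid (T' : TypeBTableau n) (f : Fin (n + 1) → Bool) : Prop :=
  (∃ r, f r = true) ∧ ∀ r : Fin n, f r.castSucc = true → unres T' r

lemma castSucc_ne_last (r : Fin n) : r.castSucc ≠ Fin.last n := by
  simp [Fin.ext_iff, Fin.last]
  omega

lemma coe_lt_n_of_ne_last {r : Fin (n + 1)} (h : r ≠ Fin.last n) : (r : ℕ) < n := by
  have := r.isLt
  have : (r : ℕ) ≠ n := fun hc => h (Fin.ext (by simp [Fin.last, hc]))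
  omega

lemma glueFill_last (F : Fin n → Fin n → Bool) (f : Fin (n + 1) → Bool) (r : Fin (n + 1)) :
    glueFill F f r (Fin.last n) = f r := by simp [glueFill]

lemma glueFill_row_last (F : Fin n → Fin n → Bool) (f : Fin (n + 1) → Bool)
    {c : Fin (n + 1)} (hc : c ≠ Fin.last n) :
    glueFill F f (Fin.last n) c = false := by simp [glueFill, hc]

lemma glueFill_old (F : Fin n → Fin n → Bool) (f : Fin (n + 1) → Bool)
    {r c : Fin (n + 1)} (hr : r ≠ Fin.last n) (hc : c ≠ Fin.last n) :
    glueFill F f r c = F (r.castPred hr) (c.castPred hc) := by simp [glueFill, hr, hc]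

/-- Gluing a south step. -/
def glueS (T' : TypeBTableau n) : TypeBTableau (n + 1) where
  west := Fin.snoc T'.west false
  filling := glueFill T'.filling (fun _ => false)
  support := by
    intro r c h
    unfold glueFill at h
    split_ifs at h with hc hr
    · obtain ⟨h1, h2⟩ := T'.support _ _ h
      constructor
      · rw [← Fin.castSucc_castPred c hc, Fin.snoc_castSucc]; exact h1
      · rw [← Fin.castSucc_castPred r hr, Fin.snoc_castSucc]
        simpa using h2
  col_one := by
    intro c hc
    have hcl : c ≠ Fin.last n := by
      rintro rfl; simp at hc
    rw [← Fin.castSucc_castPred c hcl, Fin.snoc_castSucc] at hc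
    obtain ⟨r, hr⟩ := T'.col_one _ hc
    refine ⟨r.castSucc, ?_⟩
    rw [glueFill_old _ _ (castSucc_ne_last r) hcl]
    simpa [Fin.castPred_castSucc] using hr
  no_bad_zero := by
    rintro r c hcell h0 ⟨⟨r', ha, h1⟩, ⟨c', hlt, h2⟩⟩
    have hcl : c ≠ Fin.last n := by
      rintro rfl; rw [Fin.snoc_last] at hcell; exact absurd hcell.1 (by simp)
    have hrl : r ≠ Fin.last n := by
      rintro rfl
      rw [Fin.snoc_last] at hcell
      have hc := coe_lt_n_of_ne_last hcl
      rcases hcell.2 with ⟨_, h⟩ | ⟨h, _⟩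
      · simp [Fin.last] at h; omega
      · simp at h
    have hr'l : r' ≠ Fin.last n := by
      rintro rfl; rw [glueFill_row_last _ _ hcl] at h1; simp at h1
    have hc'l : c' ≠ Fin.last n := by
      rintro rfl; rw [glueFill_last] at h2; simp at h2
    rw [glueFill_old _ _ hrl hcl] at h0
    rw [glueFill_old _ _ hr'l hcl] at h1
    rw [glueFill_old _ _ hrl hc'l] at h2
    rw [← Fin.castSucc_castPred c hcl, ← Fin.castSucc_castPred r hrl] at hcell
    rw [← Fin.castSucc_castPred r hrl, ← Fin.castSucc_castPred r' hr'l] at ha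
    simp only [Fin.snoc_castSucc] at hcell ha
    refine T'.no_bad_zero (r.castPred hrl) (c.castPred hcl) (by simpa using hcell) h0
      ⟨⟨r'.castPred hr'l, by simpa using ha, h1⟩, ⟨c'.castPred hc'l, by simpa using hlt, h2⟩⟩
  diag_zero := by
    intro j hj h0 c
    have hjl : j ≠ Fin.last n := by
      rintro rfl; simp at hj
    rw [← Fin.castSucc_castPred j hjl, Fin.snoc_castSucc] at hj
    rw [glueFill_old _ _ hjl hjl] at h0
    by_cases hcl : c = Fin.last n
    · subst hcl; rw [glueFill_last]
    · rw [glueFill_old _ _ hjl hcl]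
      exact T'.diag_zero _ hj h0 _

/-- Gluing a west step with new-column filling `f`. -/
def glueW (T' : TypeBTableau n) (f : Fin (n + 1) → Bool) (hf : Valid T' f) :
    TypeBTableau (n + 1) where
  west := Fin.snoc T'.west true
  filling := glueFill T'.filling f
  support := by
    intro r c h
    by_cases hc : c = Fin.last n
    · subst hc
      refine ⟨by simp, ?_⟩
      by_cases hw : (Fin.snoc T'.west true : Fin (n+1) → Bool) r = true
      · exact Or.inr ⟨hw, by simpa [Fin.last] using Nat.lt_succ_iff.mp r.isLt⟩
      · have hrl : r ≠ Fin.last n := by rintro rfl; simp at hw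
        exact Or.inl ⟨Bool.eq_false_iff.mpr hw, by
          simpa [Fin.last] using coe_lt_n_of_ne_last hrl⟩
    · have hrl : r ≠ Fin.last n := by
        rintro rfl; rw [glueFill_row_last _ _ hc] at h; simp at h
      rw [glueFill_old _ _ hrl hc] at h
      obtain ⟨h1, h2⟩ := T'.support _ _ h
      constructor
      · rw [← Fin.castSucc_castPred c hc, Fin.snoc_castSucc]; exact h1
      · rw [← Fin.castSucc_castPred r hrl, Fin.snoc_castSucc]
        simpa using h2
  col_one := by
    intro c hc
    by_cases hcl : c = Fin.last n
    · subst hcl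
      obtain ⟨r, hr⟩ := hf.1
      exact ⟨r, by rw [glueFill_last]; exact hr⟩
    · rw [← Fin.castSucc_castPred c hcl, Fin.snoc_castSucc] at hc
      obtain ⟨r, hr⟩ := T'.col_one _ hc
      refine ⟨r.castSucc, ?_⟩
      rw [glueFill_old _ _ (castSucc_ne_last r) hcl]
      simpa [Fin.castPred_castSucc] using hr
  no_bad_zero := by
    rintro r c hcell h0 ⟨⟨r', ha, h1⟩, ⟨c', hlt, h2⟩⟩
    by_cases hcl : c = Fin.last n
    · subst hcl
      have := c'.isLt
      simp [Fin.last] at hlt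
      omega
    · have hrl : r ≠ Fin.last n := by
        rintro rfl
        have hc := coe_lt_n_of_ne_last hcl
        rcases hcell.2 with ⟨h, _⟩ | ⟨_, h⟩
        · simp at h
        · simp [Fin.last] at h; omega
      have hr'l : r' ≠ Fin.last n := by
        rintro rfl; rw [glueFill_row_last _ _ hcl] at h1; simp at h1
      rw [glueFill_old _ _ hrl hcl] at h0
      rw [glueFill_old _ _ hr'l hcl] at h1
      rw [← Fin.castSucc_castPred c hcl, ← Fin.castSucc_castPred r hrl] at hcell
      rw [← Fin.castSucc_castPred r hrl, ← Fin.castSucc_castPred r' hr'l] at ha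
      simp only [Fin.snoc_castSucc] at hcell ha
      by_cases hc'l : c' = Fin.last n
      · -- the 1 to the left is in the new column
        subst hc'l
        rw [glueFill_last] at h2
        rw [← Fin.castSucc_castPred r hrl] at h2
        have hu := hf.2 _ h2
        exact hu.2 _ (by simpa [cellP] using hcell) h0
          ⟨r'.castPred hr'l, by simpa [aboveP] using ha, h1⟩
      · rw [glueFill_old _ _ hrl hc'l] at h2
        refine T'.no_bad_zero (r.castPred hrl) (c.castPred hcl) (by simpa using hcell) h0
          ⟨⟨r'.castPred hr'l, by simpa using ha, h1⟩,
            ⟨c'.castPred hc'l, by simpa using hlt, h2⟩⟩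
  diag_zero := by
    intro j hj h0 c
    by_cases hjl : j = Fin.last n
    · subst hjl
      by_cases hcl : c = Fin.last n
      · subst hcl; exact h0
      · exact glueFill_row_last _ _ hcl
    · rw [← Fin.castSucc_castPred j hjl, Fin.snoc_castSucc] at hj
      rw [glueFill_old _ _ hjl hjl] at h0
      by_cases hcl : c = Fin.last n
      · subst hcl
        rw [glueFill_last]
        by_contra hfj
        rw [Bool.not_eq_false] at hfj
        rw [← Fin.castSucc_castPred j hjl] at hfj
        have hu := hf.2 _ hfj
        exact absurd (hu.1 hj) (by simp [h0])
      · rw [glueFill_old _ _ hjl hcl]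
        exact T'.diag_zero _ hj h0 _

lemma tb_ext {T1 T2 : TypeBTableau n} (hw : T1.west = T2.west)
    (hf : T1.filling = T2.filling) : T1 = T2 := by
  cases T1; cases T2; simp_all

@[simp] lemma restrict_west (T : TypeBTableau (n + 1)) (r : Fin n) :
    (restrict T).west r = T.west r.castSucc := rfl

@[simp] lemma restrict_filling (T : TypeBTableau (n + 1)) (r c : Fin n) :
    (restrict T).filling r c = T.filling r.castSucc c.castSucc := rfl

lemma restrict_glueS (T' : TypeBTableau n) : restrict (glueS T') = T' := by
  refine tb_ext (funext fun r => ?_) (funext fun r => funext fun c => ?_)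
  · show (Fin.snoc T'.west false : Fin (n+1) → Bool) r.castSucc = _
    rw [Fin.snoc_castSucc]
  · show glueFill T'.filling (fun _ => false) r.castSucc c.castSucc = T'.filling r c
    rw [glueFill_old _ _ (castSucc_ne_last r) (castSucc_ne_last c)]
    simp [Fin.castPred_castSucc]

lemma restrict_glueW (T' : TypeBTableau n) (f : Fin (n + 1) → Bool) (hf : Valid T' f) :
    restrict (glueW T' f hf) = T' := by
  refine tb_ext (funext fun r => ?_) (funext fun r => funext fun c => ?_)
  · show (Fin.snoc T'.west true : Fin (n+1) → Bool) r.castSucc = _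
    rw [Fin.snoc_castSucc]
  · show glueFill T'.filling f r.castSucc c.castSucc = T'.filling r c
    rw [glueFill_old _ _ (castSucc_ne_last r) (castSucc_ne_last c)]
    simp [Fin.castPred_castSucc]

@[simp] lemma glueS_west_last (T' : TypeBTableau n) :
    (glueS T').west (Fin.last n) = false := by
  show (Fin.snoc T'.west false : Fin (n+1) → Bool) (Fin.last n) = false
  rw [Fin.snoc_last]

@[simp] lemma glueW_west_last (T' : TypeBTableau n) (f : Fin (n + 1) → Bool)
    (hf : Valid T' f) : (glueW T' f hf).west (Fin.last n) = true := by
  show (Fin.snoc T'.west true : Fin (n+1) → Bool) (Fin.last n) = true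
  rw [Fin.snoc_last]

@[simp] lemma glueW_filling_last (T' : TypeBTableau n) (f : Fin (n + 1) → Bool)
    (hf : Valid T' f) (r : Fin (n + 1)) :
    (glueW T' f hf).filling r (Fin.last n) = f r := glueFill_last _ _ _

/-- The filling of the last column. -/
def lastF (T : TypeBTableau (n + 1)) : Fin (n + 1) → Bool := fun r => T.filling r (Fin.last n)

lemma filling_last_row (T : TypeBTableau (n + 1)) {c : Fin (n + 1)} (hc : c ≠ Fin.last n) :
    T.filling (Fin.last n) c = false := by
  by_contra h
  rw [Bool.not_eq_false] at h
  have h2 := (T.support _ _ h).2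
  have := coe_lt_n_of_ne_last hc
  rcases h2 with ⟨_, hlt⟩ | ⟨_, hle⟩
  · simp [Fin.last] at hlt; omega
  · simp [Fin.last] at hle; omega

lemma valid_lastF (T : TypeBTableau (n + 1)) (hw : T.west (Fin.last n) = true) :
    Valid (restrict T) (lastF T) := by
  constructor
  · exact T.col_one _ hw
  · intro r hr
    constructor
    · intro hwr
      by_contra h0
      rw [Bool.not_eq_true] at h0
      have := T.diag_zero r.castSucc hwr h0 (Fin.last n)
      rw [show T.filling r.castSucc (Fin.last n) = lastF T r.castSucc from rfl, hr] at this
      simp at this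
    · rintro c hcell h0 ⟨r', ha, h1⟩
      refine T.no_bad_zero r.castSucc c.castSucc ?_ h0
        ⟨⟨r'.castSucc, ?_, h1⟩, ⟨Fin.last n, ?_, hr⟩⟩
      · simpa [cellP] using hcell
      · simpa [aboveP] using ha
      · simpa [Fin.last] using c.isLt

lemma filling_last_col (T : TypeBTableau (n + 1)) (hw : T.west (Fin.last n) = false)
    (r : Fin (n + 1)) : T.filling r (Fin.last n) = false := by
  by_contra h
  rw [Bool.not_eq_false] at h
  have := (T.support _ _ h).1
  rw [hw] at this; simp at this

lemma glue_restrict_S (T : TypeBTableau (n + 1)) (hw : T.west (Fin.last n) = false) :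
    glueS (restrict T) = T := by
  refine tb_ext (funext fun i => ?_) (funext fun r => funext fun c => ?_)
  · by_cases hi : i = Fin.last n
    · subst hi; rw [glueS_west_last, hw]
    · rw [← Fin.castSucc_castPred i hi]
      show (Fin.snoc (restrict T).west false : Fin (n+1) → Bool) _ = _
      rw [Fin.snoc_castSucc, restrict_west, Fin.castSucc_castPred]
  · show glueFill (restrict T).filling (fun _ => false) r c = _
    by_cases hc : c = Fin.last n
    · subst hc; rw [glueFill_last, filling_last_col T hw]
    · by_cases hr : r = Fin.last n
      · subst hr; rw [glueFill_row_last _ _ hc, filling_last_row T hc]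
      · rw [glueFill_old _ _ hr hc, restrict_filling, Fin.castSucc_castPred,
          Fin.castSucc_castPred]

lemma glue_restrict_W (T : TypeBTableau (n + 1)) (hw : T.west (Fin.last n) = true) :
    glueW (restrict T) (lastF T) (valid_lastF T hw) = T := by
  refine tb_ext (funext fun i => ?_) (funext fun r => funext fun c => ?_)
  · by_cases hi : i = Fin.last n
    · subst hi; rw [glueW_west_last, hw]
    · rw [← Fin.castSucc_castPred i hi]
      show (Fin.snoc (restrict T).west true : Fin (n+1) → Bool) _ = _
      rw [Fin.snoc_castSucc, restrict_west, Fin.castSucc_castPred]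
  · show glueFill (restrict T).filling (lastF T) r c = _
    by_cases hc : c = Fin.last n
    · subst hc; rw [glueFill_last]; rfl
    · by_cases hr : r = Fin.last n
      · subst hr; rw [glueFill_row_last _ _ hc, filling_last_row T hc]
      · rw [glueFill_old _ _ hr hc, restrict_filling, Fin.castSucc_castPred,
          Fin.castSucc_castPred]

noncomputable instance (T' : TypeBTableau n) : Fintype {f : Fin (n + 1) → Bool // Valid T' f} := by
  classical exact Subtype.fintype _

/-- Extension data for a tableau of size `n`. -/
abbrev Ext (T' : TypeBTableau n) := Option {f : Fin (n + 1) → Bool // Valid T' f}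

/-- Gluing map from extension data. -/
def glue : (Σ T' : TypeBTableau n, Ext T') → TypeBTableau (n + 1)
  | ⟨T', none⟩ => glueS T'
  | ⟨T', some f⟩ => glueW T' f.1 f.2

lemma glue_bijective : Function.Bijective (glue (n := n)) := by
  constructor
  · rintro ⟨T1, o1⟩ ⟨T2, o2⟩ h
    cases o1 with
    | none =>
      cases o2 with
      | none =>
        have hT : T1 = T2 := by
          rw [← restrict_glueS T1, ← restrict_glueS T2]
          exact congrArg restrict h
        subst hT; rfl
      | some f2 =>
        exfalso
        have := congrArg (fun T => T.west (Fin.last n)) h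
        simp only [glue] at this
        rw [glueS_west_last, glueW_west_last] at this
        simp at this
    | some f1 =>
      cases o2 with
      | none =>
        exfalso
        have := congrArg (fun T => T.west (Fin.last n)) h
        simp only [glue] at this
        rw [glueS_west_last, glueW_west_last] at this
        simp at this
      | some f2 =>
        simp only [glue] at h
        have hT : T1 = T2 := by
          rw [← restrict_glueW T1 f1.1 f1.2, ← restrict_glueW T2 f2.1 f2.2]
          exact congrArg restrict h
        subst hT
        have hff : f1.1 = f2.1 := by
          funext r
          rw [← glueW_filling_last T1 f1.1 f1.2 r, ← glueW_filling_last T1 f2.1 f2.2 r, h]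
        have : f1 = f2 := Subtype.ext hff
        subst this; rfl
  · intro T
    by_cases hw : T.west (Fin.last n) = true
    · exact ⟨⟨restrict T, some ⟨lastF T, valid_lastF T hw⟩⟩, glue_restrict_W T hw⟩
    · exact ⟨⟨restrict T, none⟩, glue_restrict_S T (by simpa using hw)⟩

/-- Decomposition of a sum over tableaux of size `n+1`. -/
lemma sum_decomp (F : TypeBTableau (n + 1) → ℝ) :
    ∑ T : TypeBTableau (n + 1), F T =
      ∑ T' : TypeBTableau n, (F (glueS T') +
        ∑ f : {f : Fin (n + 1) → Bool // Valid T' f}, F (glueW T' f.1 f.2)) := by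
  classical
  rw [← Function.Bijective.sum_comp glue_bijective F]
  rw [← Finset.univ_sigma_univ, Finset.sum_sigma]
  refine Finset.sum_congr rfl fun T' _ => ?_
  rw [Fintype.sum_option]
  rfl

@[simp] lemma cellP_snoc_cast (w : Fin n → Bool) (b : Bool) (r c : Fin n) :
    cellP (Fin.snoc w b) r.castSucc c.castSucc ↔ cellP w r c := by
  simp [cellP, Fin.snoc_castSucc]

@[simp] lemma aboveP_snoc_cast (w : Fin n → Bool) (b : Bool) (r' r : Fin n) :
    aboveP (Fin.snoc w b) r'.castSucc r.castSucc ↔ aboveP w r' r := by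
  simp [aboveP, Fin.snoc_castSucc]

lemma not_cellP_snoc_last_S (w : Fin n → Bool) (r : Fin (n + 1)) :
    ¬ cellP (Fin.snoc w false) r (Fin.last n) := by
  rintro ⟨h1, -⟩
  rw [Fin.snoc_last] at h1
  simp at h1

lemma not_cellP_cast_of_S (w : Fin n → Bool) (c : Fin n) :
    ¬ cellP (Fin.snoc w false) (Fin.last n) c.castSucc := by
  rintro ⟨-, h⟩
  have hc := c.isLt
  rcases h with ⟨-, h⟩ | ⟨h, -⟩
  · simp [Fin.last] at h; omega
  · rw [Fin.snoc_last] at h; simp at h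

lemma not_cellP_cast_of_W (w : Fin n → Bool) (c : Fin n) :
    ¬ cellP (Fin.snoc w true) (Fin.last n) c.castSucc := by
  rintro ⟨-, h⟩
  have hc := c.isLt
  rcases h with ⟨h, -⟩ | ⟨-, h⟩
  · rw [Fin.snoc_last] at h; simp at h
  · simp [Fin.last] at h; omega

lemma cellP_snoc_last_W (w : Fin n → Bool) (r : Fin (n + 1)) :
    cellP (Fin.snoc w true) r (Fin.last n) := by
  refine ⟨by rw [Fin.snoc_last], ?_⟩
  by_cases hw : (Fin.snoc w true : Fin (n + 1) → Bool) r = true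
  · exact Or.inr ⟨hw, by simpa [Fin.last] using Nat.lt_succ_iff.mp r.isLt⟩
  · have hrl : r ≠ Fin.last n := by rintro rfl; simp at hw
    exact Or.inl ⟨Bool.eq_false_iff.mpr hw, by
      simpa [Fin.last] using coe_lt_n_of_ne_last hrl⟩

lemma aboveP_last_W (w : Fin n → Bool) (r : Fin n) :
    aboveP (Fin.snoc w true) (Fin.last n) r.castSucc := by
  by_cases hw : w r = true
  · refine Or.inr (Or.inl ⟨?_, ?_, ?_⟩)
    · rw [Fin.snoc_last]
    · rw [Fin.snoc_castSucc]; exact hw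
    · simpa [Fin.last] using r.isLt
  · refine Or.inl ⟨?_, ?_⟩
    · rw [Fin.snoc_last]
    · rw [Fin.snoc_castSucc]; exact Bool.eq_false_iff.mpr hw

lemma not_aboveP_of_last_W (w : Fin n → Bool) (r' : Fin (n + 1)) :
    ¬ aboveP (Fin.snoc w true) r' (Fin.last n) := by
  have hlt := Nat.lt_succ_iff.mp r'.isLt
  rintro (⟨-, h⟩ | ⟨-, -, h⟩ | ⟨-, h, -⟩)
  · rw [Fin.snoc_last] at h; simp at h
  · simp [Fin.last] at h; omega
  · rw [Fin.snoc_last] at h; simp at h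

lemma unres_glueS_last (T' : TypeBTableau n) : unres (glueS T') (Fin.last n) := by
  constructor
  · intro h
    rw [glueS_west_last] at h; simp at h
  · intro c hc
    by_cases hcl : c = Fin.last n
    · subst hcl; exact absurd hc (not_cellP_snoc_last_S T'.west _)
    · rw [← Fin.castSucc_castPred c hcl] at hc
      exact absurd hc (not_cellP_cast_of_S T'.west _)

lemma unres_glueS_cast (T' : TypeBTableau n) (r : Fin n) :
    unres (glueS T') r.castSucc ↔ unres T' r := by
  have hwc : ∀ i : Fin n, (glueS T').west i.castSucc = T'.west i := fun i => by
    show (Fin.snoc T'.west false : Fin (n+1) → Bool) _ = _; rw [Fin.snoc_castSucc]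
  have hfc : ∀ i j : Fin n, (glueS T').filling i.castSucc j.castSucc = T'.filling i j := by
    intro i j
    show glueFill T'.filling (fun _ => false) _ _ = _
    rw [glueFill_old _ _ (castSucc_ne_last i) (castSucc_ne_last j)]
    simp [Fin.castPred_castSucc]
  constructor
  · rintro ⟨h1, h2⟩
    constructor
    · intro hw; rw [← hfc]; exact h1 (by rw [hwc]; exact hw)
    · rintro c hc h0 ⟨r', ha, hf1⟩
      refine h2 c.castSucc ?_ (by rw [hfc]; exact h0)
        ⟨r'.castSucc, ?_, by rw [hfc]; exact hf1⟩
      · exact (cellP_snoc_cast _ _ _ _).mpr hc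
      · exact (aboveP_snoc_cast _ _ _ _).mpr ha
  · rintro ⟨h1, h2⟩
    constructor
    · intro hw; rw [hfc]; exact h1 (by rw [← hwc]; exact hw)
    · rintro c hc h0 ⟨r', ha, hf1⟩
      by_cases hcl : c = Fin.last n
      · subst hcl; exact not_cellP_snoc_last_S _ _ hc
      · rw [← Fin.castSucc_castPred c hcl] at hc h0 hf1
        have hr'l : r' ≠ Fin.last n := by
          rintro rfl
          rw [show (glueS T').filling = glueFill T'.filling (fun _ => false) from rfl,
            glueFill_row_last _ _ (castSucc_ne_last _)] at hf1
          simp at hf1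
        rw [← Fin.castSucc_castPred r' hr'l] at ha hf1
        refine h2 _ ((cellP_snoc_cast _ _ _ _).mp hc) (by rw [← hfc]; exact h0)
          ⟨r'.castPred hr'l, (aboveP_snoc_cast _ _ _ _).mp ha, by rw [← hfc]; exact hf1⟩

section GlueWLemmas
variable (T' : TypeBTableau n) (f : Fin (n + 1) → Bool) (hf : Valid T' f)

lemma unres_glueW_last : unres (glueW T' f hf) (Fin.last n) ↔ f (Fin.last n) = true := by
  constructor
  · intro h
    have := h.1 (glueW_west_last T' f hf)
    rwa [glueW_filling_last] at this
  · intro hd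
    constructor
    · intro _; rwa [glueW_filling_last]
    · rintro c hc h0 ⟨r', ha, -⟩
      by_cases hcl : c = Fin.last n
      · subst hcl
        rw [glueW_filling_last, hd] at h0; simp at h0
      · rw [← Fin.castSucc_castPred c hcl] at hc
        exact not_cellP_cast_of_W _ _ hc
  
lemma unres_glueW_cast (r : Fin n) :
    unres (glueW T' f hf) r.castSucc ↔
      unres T' r ∧ (f r.castSucc = true ∨ (f (Fin.last n) = false ∧
        ∀ r'' : Fin n, aboveP T'.west r'' r → f r''.castSucc = false)) := by
  have hwc : ∀ i : Fin n, (glueW T' f hf).west i.castSucc = T'.west i := fun i => by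
    show (Fin.snoc T'.west true : Fin (n+1) → Bool) _ = _; rw [Fin.snoc_castSucc]
  have hfc : ∀ i j : Fin n, (glueW T' f hf).filling i.castSucc j.castSucc = T'.filling i j := by
    intro i j
    show glueFill T'.filling f _ _ = _
    rw [glueFill_old _ _ (castSucc_ne_last i) (castSucc_ne_last j)]
    simp [Fin.castPred_castSucc]
  constructor
  · rintro ⟨h1, h2⟩
    have hu : unres T' r := by
      constructor
      · intro hw; rw [← hfc]; exact h1 (by rw [hwc]; exact hw)
      · rintro c hc h0 ⟨r', ha, hf1⟩
        refine h2 c.castSucc ((cellP_snoc_cast _ _ _ _).mpr hc) (by rw [hfc]; exact h0)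
          ⟨r'.castSucc, (aboveP_snoc_cast _ _ _ _).mpr ha, by rw [hfc]; exact hf1⟩
    refine ⟨hu, ?_⟩
    by_cases hfr : f r.castSucc = true
    · exact Or.inl hfr
    · refine Or.inr ?_
      have hcell : cellP (glueW T' f hf).west r.castSucc (Fin.last n) :=
        cellP_snoc_last_W _ _
      have h0 : (glueW T' f hf).filling r.castSucc (Fin.last n) = false := by
        rw [glueW_filling_last]; exact Bool.eq_false_iff.mpr hfr
      have hnot := h2 (Fin.last n) hcell h0
      constructor
      · by_contra hd
        rw [Bool.not_eq_false] at hd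
        exact hnot ⟨Fin.last n, aboveP_last_W _ _, by rwa [glueW_filling_last]⟩
      · intro r'' ha
        by_contra hd
        rw [Bool.not_eq_false] at hd
        refine hnot ⟨r''.castSucc, ?_, by rwa [glueW_filling_last]⟩
        exact (aboveP_snoc_cast _ _ _ _).mpr ha
  · rintro ⟨hu, hsurv⟩
    constructor
    · intro hw; rw [hfc]; exact hu.1 (by rw [← hwc]; exact hw)
    · rintro c hc h0 ⟨r', ha, hf1⟩
      by_cases hcl : c = Fin.last n
      · subst hcl
        rw [glueW_filling_last] at h0 hf1
        rcases hsurv with hfr | ⟨hd, hall⟩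
        · rw [hfr] at h0; simp at h0
        · by_cases hr'l : r' = Fin.last n
          · subst hr'l; rw [hd] at hf1; simp at hf1
          · rw [← Fin.castSucc_castPred r' hr'l] at ha hf1
            rw [hall _ ((aboveP_snoc_cast _ _ _ _).mp ha)] at hf1
            simp at hf1
      · rw [← Fin.castSucc_castPred c hcl] at hc h0 hf1
        have hr'l : r' ≠ Fin.last n := by
          rintro rfl
          rw [show (glueW T' f hf).filling = glueFill T'.filling f from rfl,
            glueFill_row_last _ _ (castSucc_ne_last _)] at hf1
          simp at hf1
        rw [← Fin.castSucc_castPred r' hr'l] at ha hf1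
        refine hu.2 _ ((cellP_snoc_cast _ _ _ _).mp hc) (by rw [← hfc]; exact h0)
          ⟨r'.castPred hr'l, (aboveP_snoc_cast _ _ _ _).mp ha, by rw [← hfc]; exact hf1⟩

end GlueWLemmas

lemma U_split (T : TypeBTableau (n + 1)) :
    U T = (∑ r : Fin n, if unres T r.castSucc then 1 else 0) +
      (if unres T (Fin.last n) then 1 else 0) := by
  unfold U
  rw [Finset.card_filter]
  rw [Fin.sum_univ_castSucc]

lemma U_glueS (T' : TypeBTableau n) : U (glueS T') = U T' + 1 := by
  rw [U_split, if_pos (unres_glueS_last T')]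
  congr 1
  unfold U
  rw [Finset.card_filter]
  exact Finset.sum_congr rfl fun r _ => by rw [if_congr (unres_glueS_cast T' r) rfl rfl]

/-- Survival of an unrestricted row upon gluing a west column. -/
def surv (T' : TypeBTableau n) (f : Fin (n + 1) → Bool) (r : Fin n) : Prop :=
  f r.castSucc = true ∨ (f (Fin.last n) = false ∧
    ∀ r'' : Fin n, aboveP T'.west r'' r → f r''.castSucc = false)

lemma U_glueW (T' : TypeBTableau n) (f : Fin (n + 1) → Bool) (hf : Valid T' f) :
    U (glueW T' f hf) = (Finset.univ.filter
      (fun r : Fin n => unres T' r ∧ surv T' f r)).card +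
      (if f (Fin.last n) = true then 1 else 0) := by
  rw [U_split, if_congr (unres_glueW_last T' f hf) rfl rfl]
  congr 1
  rw [Finset.card_filter]
  exact Finset.sum_congr rfl fun r _ => by
    rw [if_congr (unres_glueW_cast T' f hf r) rfl rfl]; exact if_congr Iff.rfl rfl rfl

lemma sum_powerset_pow (s : Finset ℕ) (y : ℝ) :
    ∑ A ∈ s.powerset, y ^ A.card = (1 + y) ^ s.card := by
  induction s using Finset.induction_on with
  | empty => simp
  | insert a s ha ih =>
    rw [Finset.sum_powerset_insert ha, Finset.card_insert_of_notMem ha]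
    have h2 : ∀ A ∈ s.powerset, y ^ (insert a A).card = y * y ^ A.card := by
      intro A hA
      rw [Finset.card_insert_of_notMem (fun h => ha (Finset.mem_powerset.mp hA h))]
      ring
    rw [Finset.sum_congr rfl h2, ← Finset.mul_sum, ih]
    ring

lemma sum_powerset_max (s : Finset ℕ) (y : ℝ) :
    ∑ A ∈ s.powerset, y ^ (A.card + (s.filter fun x => ∀ b ∈ A, b < x).card) =
      y * (1 + y) ^ s.card - y * y ^ s.card + y ^ s.card := by
  induction s using Finset.induction_on_max with
  | empty => simp
  | insert a s hmax ih =>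
    have ha : a ∉ s := fun h => lt_irrefl a (hmax a h)
    rw [Finset.sum_powerset_insert ha, Finset.card_insert_of_notMem ha]
    have h1 : ∀ A ∈ s.powerset,
        y ^ (A.card + ((insert a s).filter fun x => ∀ b ∈ A, b < x).card) =
          y * y ^ (A.card + (s.filter fun x => ∀ b ∈ A, b < x).card) := by
      intro A hA
      have hpa : ∀ b ∈ A, b < a := fun b hb => hmax b (Finset.mem_powerset.mp hA hb)
      rw [Finset.filter_insert, if_pos hpa,
        Finset.card_insert_of_notMem (fun h => ha (Finset.mem_filter.mp h).1)]
      ring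
    have h2 : ∀ A ∈ s.powerset,
        y ^ ((insert a A).card + ((insert a s).filter
          fun x => ∀ b ∈ insert a A, b < x).card) = y * y ^ A.card := by
      intro A hA
      have hA' : A ⊆ s := Finset.mem_powerset.mp hA
      have hfe : ((insert a s).filter fun x => ∀ b ∈ insert a A, b < x) = ∅ := by
        rw [Finset.filter_eq_empty_iff]
        intro x hx h
        have hax := h a (Finset.mem_insert_self a A)
        rcases Finset.mem_insert.mp hx with rfl | hx'
        · exact lt_irrefl _ hax
        · exact lt_asymm hax (hmax x hx')
      rw [hfe, Finset.card_insert_of_notMem (fun h => ha (hA' h))]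
      simp; ring
    rw [Finset.sum_congr rfl h1, Finset.sum_congr rfl h2, ← Finset.mul_sum,
      ← Finset.mul_sum, ih, sum_powerset_pow]
    ring

lemma sum_powerset_max_nonempty (s : Finset ℕ) (y : ℝ) :
    ∑ A ∈ s.powerset.filter (·.Nonempty),
      y ^ (A.card + (s.filter fun x => ∀ b ∈ A, b < x).card) =
      y * (1 + y) ^ s.card - y * y ^ s.card := by
  have hmem : (∅ : Finset ℕ) ∈ s.powerset := Finset.empty_mem_powerset s
  have hsplit := Finset.add_sum_erase s.powerset
    (fun A => y ^ (A.card + (s.filter fun x => ∀ b ∈ A, b < x).card)) hmem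
  have herase : s.powerset.erase ∅ = s.powerset.filter (·.Nonempty) := by
    ext A
    simp [Finset.mem_erase, Finset.nonempty_iff_ne_empty, and_comm]
  have hempty : ((∅ : Finset ℕ).card + (s.filter fun x => ∀ b ∈ (∅ : Finset ℕ), b < x).card)
      = s.card := by
    simp
  rw [herase] at hsplit
  have h2 := sum_powerset_max s y
  rw [← hsplit] at h2
  rw [hempty] at h2
  linarith

section SumGlueW
variable (T' : TypeBTableau n)

/-- The keys of the unrestricted rows. -/
noncomputable def uKeys : Finset ℕ := (Finset.univ.filter (unres T')).image (key T'.west)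

lemma uKeys_card : (uKeys T').card = U T' :=
  Finset.card_image_of_injective _ (key_inj T'.west)

/-- The key-set of the new column of a filling. -/
noncomputable def colSet (f : Fin (n + 1) → Bool) : Finset ℕ :=
  (Finset.univ.filter (fun r : Fin n => f r.castSucc = true)).image (key T'.west)

lemma mem_colSet (f : Fin (n + 1) → Bool) (r : Fin n) :
    key T'.west r ∈ colSet T' f ↔ f r.castSucc = true := by
  unfold colSet
  rw [Finset.mem_image]
  constructor
  · rintro ⟨r₀, hr₀, hk⟩
    rw [← key_inj T'.west hk]
    exact (Finset.mem_filter.mp hr₀).2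
  · intro h
    exact ⟨r, Finset.mem_filter.mpr ⟨Finset.mem_univ r, h⟩, rfl⟩

lemma colSet_subset {f : Fin (n + 1) → Bool} (hf : Valid T' f) :
    colSet T' f ⊆ uKeys T' := by
  refine Finset.image_subset_image (fun r hr => ?_)
  rw [Finset.mem_filter] at hr ⊢
  exact ⟨hr.1, hf.2 r hr.2⟩

/-- The filling associated to a pair `(d, A)`. -/
noncomputable def mkF (d : Bool) (A : Finset ℕ) : Fin (n + 1) → Bool := fun i =>
  if h : i = Fin.last n then d else decide (key T'.west (i.castPred h) ∈ A)

@[simp] lemma mkF_last (d : Bool) (A : Finset ℕ) : mkF T' d A (Fin.last n) = d := by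
  simp [mkF]

@[simp] lemma mkF_cast (d : Bool) (A : Finset ℕ) (r : Fin n) :
    mkF T' d A r.castSucc = decide (key T'.west r ∈ A) := by
  rw [mkF, dif_neg (castSucc_ne_last r), Fin.castPred_castSucc]

lemma valid_mkF (d : Bool) (A : Finset ℕ) (hA : A ⊆ uKeys T')
    (hne : d = true ∨ A.Nonempty) : Valid T' (mkF T' d A) := by
  constructor
  · rcases hne with rfl | ⟨b, hb⟩
    · exact ⟨Fin.last n, by simp⟩
    · obtain ⟨r₀, hr₀, rfl⟩ := Finset.mem_image.mp (hA hb)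
      exact ⟨r₀.castSucc, by simp [hb]⟩
  · intro r hr
    rw [mkF_cast] at hr
    have hmem : key T'.west r ∈ uKeys T' := hA (by simpa using hr)
    obtain ⟨r₀, hr₀, hk⟩ := Finset.mem_image.mp hmem
    rw [← key_inj T'.west hk]
    exact (Finset.mem_filter.mp hr₀).2

lemma colSet_mkF (d : Bool) (A : Finset ℕ) (hA : A ⊆ uKeys T') :
    colSet T' (mkF T' d A) = A := by
  ext b
  constructor
  · intro hb
    obtain ⟨r₀, hr₀, rfl⟩ := Finset.mem_image.mp hb
    have := (Finset.mem_filter.mp hr₀).2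
    rw [mkF_cast] at this
    simpa using this
  · intro hb
    obtain ⟨r₀, hr₀, rfl⟩ := Finset.mem_image.mp (hA hb)
    rw [mem_colSet, mkF_cast]
    simpa using hb

lemma mkF_colSet {f : Fin (n + 1) → Bool} (hf : Valid T' f) :
    mkF T' (f (Fin.last n)) (colSet T' f) = f := by
  funext i
  by_cases hi : i = Fin.last n
  · subst hi; simp
  · rw [← Fin.castSucc_castPred i hi, mkF_cast]
    by_cases hfr : f (i.castPred hi).castSucc = true
    · rw [hfr, decide_eq_true_eq]
      exact (mem_colSet T' f _).mpr hfr
    · rw [Bool.not_eq_true] at hfr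
      rw [hfr, decide_eq_false_iff_not]
      intro h
      rw [(mem_colSet T' f _).mp h] at hfr
      simp at hfr

lemma card_surv_true {f : Fin (n + 1) → Bool} (hf : Valid T' f)
    (hd : f (Fin.last n) = true) :
    (Finset.univ.filter (fun r : Fin n => unres T' r ∧ surv T' f r)).card =
      (colSet T' f).card := by
  rw [← Finset.card_image_of_injective _ (key_inj T'.west)]
  congr 1
  unfold colSet
  congr 1
  ext r
  simp only [Finset.mem_filter, Finset.mem_univ, true_and]
  constructor
  · rintro ⟨-, hfr | ⟨hd', -⟩⟩
    · exact hfr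
    · rw [hd] at hd'; simp at hd'
  · intro hfr
    exact ⟨hf.2 r hfr, Or.inl hfr⟩

lemma card_surv_false {f : Fin (n + 1) → Bool} (hf : Valid T' f)
    (hd : f (Fin.last n) = false) :
    (Finset.univ.filter (fun r : Fin n => unres T' r ∧ surv T' f r)).card =
      (colSet T' f).card +
      ((uKeys T').filter (fun x => ∀ b ∈ colSet T' f, b < x)).card := by
  rw [← Finset.card_image_of_injective
    (Finset.univ.filter (fun r : Fin n => unres T' r ∧ surv T' f r)) (key_inj T'.west)]
  have himg : (Finset.univ.filter (fun r : Fin n => unres T' r ∧ surv T' f r)).image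
      (key T'.west) =
      colSet T' f ∪ (uKeys T').filter (fun x => ∀ b ∈ colSet T' f, b < x) := by
    ext b
    simp only [Finset.mem_image, Finset.mem_union, Finset.mem_filter, Finset.mem_univ,
      true_and]
    constructor
    · rintro ⟨r, ⟨hu, hs⟩, rfl⟩
      by_cases hfr : f r.castSucc = true
      · exact Or.inl ((mem_colSet T' f r).mpr hfr)
      · rcases hs with hfr' | ⟨-, hall⟩
        · exact absurd hfr' hfr
        · refine Or.inr ⟨Finset.mem_image_of_mem _ (Finset.mem_filter.mpr
            ⟨Finset.mem_univ r, hu⟩), ?_⟩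
          intro b hb
          obtain ⟨r₀, hr₀, rfl⟩ := Finset.mem_image.mp hb
          have hf0 := (Finset.mem_filter.mp hr₀).2
          rcases lt_trichotomy (key T'.west r₀) (key T'.west r) with h | h | h
          · exact h
          · exfalso
            rw [key_inj T'.west h] at hf0
            exact hfr hf0
          · exact absurd hf0 (by
              rw [hall r₀ ((aboveP_iff_key T'.west r₀ r).mpr h)]; simp)
    · rintro (hb | ⟨hb, hall⟩)
      · obtain ⟨r₀, hr₀, rfl⟩ := Finset.mem_image.mp hb
        have hfr := (Finset.mem_filter.mp hr₀).2
        exact ⟨r₀, ⟨hf.2 r₀ hfr, Or.inl hfr⟩, rfl⟩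
      · obtain ⟨r₀, hr₀, rfl⟩ := Finset.mem_image.mp hb
        have hu := (Finset.mem_filter.mp hr₀).2
        refine ⟨r₀, ⟨hu, Or.inr ⟨hd, fun r'' ha => ?_⟩⟩, rfl⟩
        by_contra hc
        rw [Bool.not_eq_false] at hc
        have hmem := (mem_colSet T' f r'').mpr hc
        have := hall _ hmem
        rw [aboveP_iff_key] at ha
        omega
  rw [himg, Finset.card_union_of_disjoint]
  rw [Finset.disjoint_left]
  intro b hb hb2
  have := (Finset.mem_filter.mp hb2).2 b hb
  omega

/-- The main column-sum computation. -/
lemma sum_glueW (y : ℝ) :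
    ∑ f : {f : Fin (n + 1) → Bool // Valid T' f}, y ^ U (glueW T' f.1 f.2) =
      2 * y * (1 + y) ^ U T' - y * y ^ U T' := by
  classical
  rw [← Finset.sum_filter_add_sum_filter_not Finset.univ
    (fun f : {f : Fin (n + 1) → Bool // Valid T' f} => f.1 (Fin.last n) = true)]
  have hdef : Valid T' (mkF T' true ∅) := valid_mkF T' true ∅ (by simp) (Or.inl rfl)
  have htrue : ∑ f ∈ Finset.univ.filter
      (fun f : {f : Fin (n + 1) → Bool // Valid T' f} => f.1 (Fin.last n) = true),
      y ^ U (glueW T' f.1 f.2) = ∑ A ∈ (uKeys T').powerset, y ^ (A.card + 1) := by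
    refine Finset.sum_nbij' (i := fun f => colSet T' f.1)
      (j := fun A => if hA : A ⊆ uKeys T' then ⟨mkF T' true A,
        valid_mkF T' true A hA (Or.inl rfl)⟩ else ⟨mkF T' true ∅, hdef⟩)
      ?_ ?_ ?_ ?_ ?_
    · intro f hf
      exact Finset.mem_powerset.mpr (colSet_subset T' f.2)
    · intro A hA
      simp only [dif_pos (Finset.mem_powerset.mp hA)]
      simp
    · intro f hf
      simp only [dif_pos (colSet_subset T' f.2)]
      have hd := (Finset.mem_filter.mp hf).2
      refine Subtype.ext ?_
      have h2 := mkF_colSet T' f.2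
      rw [hd] at h2
      exact h2
    · intro A hA
      simp only [dif_pos (Finset.mem_powerset.mp hA)]
      exact colSet_mkF T' true A (Finset.mem_powerset.mp hA)
    · intro f hf
      have hd := (Finset.mem_filter.mp hf).2
      rw [U_glueW T' f.1 f.2, if_pos hd, card_surv_true T' f.2 hd]
  have hfalse : ∑ f ∈ Finset.univ.filter
      (fun f : {f : Fin (n + 1) → Bool // Valid T' f} => ¬ f.1 (Fin.last n) = true),
      y ^ U (glueW T' f.1 f.2) = ∑ A ∈ (uKeys T').powerset.filter (·.Nonempty),
      y ^ (A.card + ((uKeys T').filter (fun x => ∀ b ∈ A, b < x)).card) := by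
    refine Finset.sum_nbij' (i := fun f => colSet T' f.1)
      (j := fun A => if hA : A ⊆ uKeys T' ∧ A.Nonempty then ⟨mkF T' false A,
        valid_mkF T' false A hA.1 (Or.inr hA.2)⟩ else ⟨mkF T' true ∅, hdef⟩)
      ?_ ?_ ?_ ?_ ?_
    · intro f hf
      have hd := (Finset.mem_filter.mp hf).2
      rw [Bool.not_eq_true] at hd
      refine Finset.mem_filter.mpr ⟨Finset.mem_powerset.mpr (colSet_subset T' f.2), ?_⟩
      obtain ⟨r, hr⟩ := f.2.1
      have hrl : r ≠ Fin.last n := by rintro rfl; rw [hd] at hr; simp at hr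
      rw [← Fin.castSucc_castPred r hrl] at hr
      exact ⟨_, (mem_colSet T' f.1 _).mpr hr⟩
    · intro A hA
      rw [Finset.mem_filter, Finset.mem_powerset] at hA
      simp only [dif_pos hA]
      simp
    · intro f hf
      have hd := (Finset.mem_filter.mp hf).2
      rw [Bool.not_eq_true] at hd
      have hmem : colSet T' f.1 ⊆ uKeys T' ∧ (colSet T' f.1).Nonempty := by
        constructor
        · exact colSet_subset T' f.2
        · obtain ⟨r, hr⟩ := f.2.1
          have hrl : r ≠ Fin.last n := by rintro rfl; rw [hd] at hr; simp at hr
          rw [← Fin.castSucc_castPred r hrl] at hr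
          exact ⟨_, (mem_colSet T' f.1 _).mpr hr⟩
      simp only [dif_pos hmem]
      refine Subtype.ext ?_
      have h2 := mkF_colSet T' f.2
      rw [hd] at h2
      exact h2
    · intro A hA
      rw [Finset.mem_filter, Finset.mem_powerset] at hA
      simp only [dif_pos hA]
      exact colSet_mkF T' false A hA.1
    · intro f hf
      have hd := (Finset.mem_filter.mp hf).2
      rw [Bool.not_eq_true] at hd
      rw [U_glueW T' f.1 f.2, if_neg (by rw [hd]; simp), card_surv_false T' f.2 hd]
      ring_nf
  rw [htrue, hfalse, sum_powerset_max_nonempty, uKeys_card]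
  have h1 : ∑ A ∈ (uKeys T').powerset, y ^ (A.card + 1) =
      y * (1 + y) ^ (uKeys T').card := by
    rw [← sum_powerset_pow (uKeys T') y, Finset.mul_sum]
    exact Finset.sum_congr rfl fun A _ => by ring
  rw [h1, uKeys_card]
  ring

end SumGlueW

/-- Peeling the last step, unconditionally. -/
lemma peel_total (q : TypeBTableau n → ℝ) (y : ℝ) :
    ∑ T : TypeBTableau (n + 1), q (restrict T) * y ^ U T =
      ∑ T' : TypeBTableau n, q T' * (2 * y * (1 + y) ^ U T') := by
  rw [sum_decomp (fun T => q (restrict T) * y ^ U T)]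
  refine Finset.sum_congr rfl fun T' _ => ?_
  have hW : ∑ f : {f : Fin (n + 1) → Bool // Valid T' f},
      q (restrict (glueW T' f.1 f.2)) * y ^ U (glueW T' f.1 f.2) =
      q T' * (2 * y * (1 + y) ^ U T' - y * y ^ U T') := by
    rw [← sum_glueW T' y, Finset.mul_sum]
    exact Fintype.sum_congr _ _ fun f => by rw [restrict_glueW]
  rw [hW, restrict_glueS, U_glueS]
  ring

/-- Peeling the last step, conditioned on it being a west step. -/
lemma peel_west (q : TypeBTableau n → ℝ) (y : ℝ) :
    ∑ T : TypeBTableau (n + 1),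
      (if T.west (Fin.last n) = true then q (restrict T) else 0) * y ^ U T =
      ∑ T' : TypeBTableau n, q T' * (2 * y * (1 + y) ^ U T' - y * y ^ U T') := by
  rw [sum_decomp (fun T => (if T.west (Fin.last n) = true then q (restrict T) else 0) * y ^ U T)]
  refine Finset.sum_congr rfl fun T' _ => ?_
  rw [if_neg (by rw [glueS_west_last]; simp)]
  have hW : ∑ f : {f : Fin (n + 1) → Bool // Valid T' f},
      (if (glueW T' f.1 f.2).west (Fin.last n) = true then q (restrict (glueW T' f.1 f.2))
        else 0) * y ^ U (glueW T' f.1 f.2) =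
      q T' * (2 * y * (1 + y) ^ U T' - y * y ^ U T') := by
    rw [← sum_glueW T' y, Finset.mul_sum]
    refine Fintype.sum_congr _ _ fun f => ?_
    rw [if_pos (glueW_west_last T' f.1 f.2), restrict_glueW]
  rw [hW]
  ring

instance : Unique (TypeBTableau 0) where
  default :=
    { west := fun i => i.elim0
      filling := fun i => i.elim0
      support := fun r => r.elim0
      col_one := fun c => c.elim0
      no_bad_zero := fun r => r.elim0
      diag_zero := fun j => j.elim0 }
  uniq T := tb_ext (funext fun i => i.elim0) (funext fun i => i.elim0)

/-- The generating function of `U` over all tableaux of size `j`. -/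
noncomputable def Gs (j : ℕ) (y : ℝ) : ℝ := ∑ T : TypeBTableau j, y ^ U T

lemma Gs_zero (y : ℝ) : Gs 0 y = 1 := by
  unfold Gs
  rw [Fintype.sum_unique]
  have : U (default : TypeBTableau 0) = 0 := by
    unfold U
    simp
  rw [this, pow_zero]

lemma Gs_succ (j : ℕ) (y : ℝ) : Gs (j + 1) y = 2 * y * Gs j (1 + y) := by
  unfold Gs
  have := peel_total (n := j) (fun _ => 1) y
  simp only [one_mul] at this
  rw [this, Finset.mul_sum]

lemma Gs_eq (j : ℕ) (y : ℝ) : Gs j y = 2 ^ j * ∏ i ∈ Finset.range j, (y + i) := by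
  induction j generalizing y with
  | zero => simp [Gs_zero]
  | succ j ih =>
    rw [Gs_succ, ih (1 + y), Finset.prod_range_succ' (fun i => y + (i : ℝ))]
    have : ∏ i ∈ Finset.range j, (1 + y + (i : ℝ)) =
        ∏ i ∈ Finset.range j, (y + ((i : ℕ) + 1 : ℕ)) := by
      refine Finset.prod_congr rfl fun i _ => ?_
      push_cast; ring
    rw [this]
    push_cast
    ring

/-- Total weight of tableaux whose last step is west. -/
lemma sum_west_last (j : ℕ) (z : ℝ) :
    ∑ T : TypeBTableau (j + 1), (if T.west (Fin.last j) = true then 1 else 0) * z ^ U T =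
      2 * z * Gs j (1 + z) - z * Gs j z := by
  have := peel_west (n := j) (fun _ => 1) z
  rw [this]
  unfold Gs
  rw [Finset.mul_sum, Finset.mul_sum, ← Finset.sum_sub_distrib]
  exact Finset.sum_congr rfl fun T _ => by ring

lemma S2_peel (a j : ℕ) (h : a + 2 ≤ j) (y : ℝ) :
    ∑ T : TypeBTableau (j + 1),
      (if T.west ⟨a, by omega⟩ = true ∧ T.west ⟨a + 1, by omega⟩ = true then 1 else 0) *
        y ^ U T =
    2 * y * ∑ T : TypeBTableau j,
      (if T.west ⟨a, by omega⟩ = true ∧ T.west ⟨a + 1, by omega⟩ = true then 1 else 0) *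
        (1 + y) ^ U T := by
  have hp := peel_total (n := j)
    (fun T' => if T'.west ⟨a, by omega⟩ = true ∧ T'.west ⟨a + 1, by omega⟩ = true
      then 1 else 0) y
  rw [Finset.mul_sum]
  rw [show (∑ T : TypeBTableau (j + 1),
      (if T.west ⟨a, by omega⟩ = true ∧ T.west ⟨a + 1, by omega⟩ = true then 1 else 0) *
        y ^ U T) = ∑ T : TypeBTableau (j + 1),
      (if (restrict T).west ⟨a, by omega⟩ = true ∧
          (restrict T).west ⟨a + 1, by omega⟩ = true then (1:ℝ) else 0) * y ^ U T from
    Finset.sum_congr rfl fun T _ => rfl]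
  rw [hp]
  exact Finset.sum_congr rfl fun T _ => by ring

lemma S2_base (a : ℕ) (y : ℝ) :
    ∑ T : TypeBTableau (a + 2),
      (if T.west ⟨a, by omega⟩ = true ∧ T.west ⟨a + 1, by omega⟩ = true then 1 else 0) *
        y ^ U T =
    2 * y * (2 * (1 + y) * Gs a (1 + (1 + y)) - (1 + y) * Gs a (1 + y)) -
      y * (2 * y * Gs a (1 + y) - y * Gs a y) := by
  have hsplit : ∀ T : TypeBTableau (a + 2),
      ((if T.west ⟨a, by omega⟩ = true ∧ T.west ⟨a + 1, by omega⟩ = true then (1:ℝ) else 0)) =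
      (if T.west (Fin.last (a + 1)) = true then
        (if (restrict T).west (Fin.last a) = true then (1:ℝ) else 0) else 0) := by
    intro T
    have h1 : T.west (⟨a + 1, by omega⟩ : Fin (a + 2)) = T.west (Fin.last (a + 1)) := rfl
    have h2 : T.west (⟨a, by omega⟩ : Fin (a + 2)) =
        (restrict T).west (Fin.last a) := rfl
    rw [h1, h2]
    by_cases hq : T.west (Fin.last (a + 1)) = true <;>
      by_cases hp : (restrict T).west (Fin.last a) = true <;> simp [hq, hp] <;> exact if_congr Iff.rfl rfl rfl
  rw [Finset.sum_congr rfl (fun T _ => by rw [hsplit T])]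
  have hw := peel_west (n := a + 1)
    (fun T' => if T'.west (Fin.last a) = true then (1:ℝ) else 0) y
  rw [hw]
  have hexp : ∑ T' : TypeBTableau (a + 1),
      (if T'.west (Fin.last a) = true then (1:ℝ) else 0) *
        (2 * y * (1 + y) ^ U T' - y * y ^ U T') =
      2 * y * (∑ T' : TypeBTableau (a + 1),
        (if T'.west (Fin.last a) = true then (1:ℝ) else 0) * (1 + y) ^ U T') -
      y * (∑ T' : TypeBTableau (a + 1),
        (if T'.west (Fin.last a) = true then (1:ℝ) else 0) * y ^ U T') := by
    rw [Finset.mul_sum, Finset.mul_sum, ← Finset.sum_sub_distrib]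
    exact Finset.sum_congr rfl fun T _ => by ring
  rw [hexp, sum_west_last a (1 + y), sum_west_last a y]

lemma S2_chain (a m : ℕ) (y : ℝ) :
    ∑ T : TypeBTableau (a + 2 + m),
      (if T.west ⟨a, by omega⟩ = true ∧ T.west ⟨a + 1, by omega⟩ = true then 1 else 0) *
        y ^ U T =
    (∏ i ∈ Finset.range m, (2 * (y + i))) * ∑ T : TypeBTableau (a + 2),
      (if T.west ⟨a, by omega⟩ = true ∧ T.west ⟨a + 1, by omega⟩ = true then 1 else 0) *
        (y + m) ^ U T := by
  induction m generalizing y with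
  | zero =>
    simp
  | succ m ih =>
    have hpeel := S2_peel a (a + 2 + m) (by omega) y
    show (∑ T : TypeBTableau (a + 2 + m + 1),
      (if T.west ⟨a, by omega⟩ = true ∧ T.west ⟨a + 1, by omega⟩ = true then 1 else 0) *
        y ^ U T) =
      (∏ i ∈ Finset.range (m + 1), (2 * (y + i))) * ∑ T : TypeBTableau (a + 2),
      (if T.west ⟨a, by omega⟩ = true ∧ T.west ⟨a + 1, by omega⟩ = true then 1 else 0) *
        (y + ((m + 1 : ℕ) : ℝ)) ^ U T
    rw [hpeel, ih (1 + y)]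
    rw [Finset.prod_range_succ' (fun i => 2 * (y + (i : ℝ)))]
    have hprod : ∏ i ∈ Finset.range m, (2 * (1 + y + (i : ℝ))) =
        ∏ i ∈ Finset.range m, (2 * (y + ((i + 1 : ℕ) : ℝ))) := by
      refine Finset.prod_congr rfl fun i _ => ?_
      push_cast; ring
    have hsum : ∑ T : TypeBTableau (a + 2),
        (if T.west ⟨a, by omega⟩ = true ∧ T.west ⟨a + 1, by omega⟩ = true then (1:ℝ) else 0) *
          (1 + y + m) ^ U T =
        ∑ T : TypeBTableau (a + 2),
        (if T.west ⟨a, by omega⟩ = true ∧ T.west ⟨a + 1, by omega⟩ = true then (1:ℝ) else 0) *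
          (y + ((m + 1 : ℕ) : ℝ)) ^ U T := by
      refine Finset.sum_congr rfl fun T _ => ?_
      have : 1 + y + (m : ℝ) = y + ((m + 1 : ℕ) : ℝ) := by push_cast; ring
      rw [this]
    rw [hsum] at *
    rw [hprod]
    push_cast
    ring

lemma card_eq_Gs (j : ℕ) : (Fintype.card (TypeBTableau j) : ℝ) = Gs j 1 := by
  unfold Gs
  have h1 : ∑ T : TypeBTableau j, (1:ℝ) ^ U T = ∑ _T : TypeBTableau j, (1:ℝ) :=
    Finset.sum_congr rfl (fun T _ => one_pow _)
  rw [h1, Finset.sum_const, Finset.card_univ, nsmul_eq_mul, mul_one]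

lemma prod_shift (z : ℝ) (a : ℕ) :
    z * ∏ i ∈ Finset.range a, (z + 1 + i) = (z + a) * ∏ i ∈ Finset.range a, (z + i) := by
  have h1 : ∏ i ∈ Finset.range a, (z + 1 + (i : ℝ)) =
      ∏ i ∈ Finset.range a, (z + ((i + 1 : ℕ) : ℝ)) := by
    refine Finset.prod_congr rfl fun i _ => ?_
    push_cast; ring
  have h2 := Finset.prod_range_succ' (fun i => z + (i : ℝ)) a
  have h3 := Finset.prod_range_succ (fun i => z + (i : ℝ)) a
  rw [h1]
  have : (∏ i ∈ Finset.range a, (z + ((i + 1 : ℕ) : ℝ))) * (z + (0 : ℕ)) =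
      (∏ i ∈ Finset.range a, (z + i)) * (z + a) := by
    rw [← h2, h3]
  push_cast
  push_cast at this
  linear_combination this

lemma final_count (a m : ℕ) (h1 : a < a + 2 + m) (h2 : a + 1 < a + 2 + m) :
    ((Finset.univ.filter (fun T : TypeBTableau (a + 2 + m) =>
        T.west ⟨a, h1⟩ = true ∧ T.west ⟨a + 1, h2⟩ = true)).card : ℝ) =
      (((a + 2 : ℕ) : ℝ) / ((a + 2 + m : ℕ) : ℝ) - 3 / (2 * ((a + 2 + m : ℕ) : ℝ)) +
        (((a + 2 + m : ℕ) : ℝ) - ((a + 2 : ℕ) : ℝ) + 1) ^ 2 /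
          (4 * ((a + 2 + m : ℕ) : ℝ) * (((a + 2 + m : ℕ) : ℝ) - 1))) *
        (Fintype.card (TypeBTableau (a + 2 + m)) : ℝ) := by
  classical
  rw [Finset.card_filter]
  push_cast
  have hstep : ∑ T : TypeBTableau (a + 2 + m),
      (if T.west ⟨a, h1⟩ = true ∧ T.west ⟨a + 1, h2⟩ = true then (1:ℝ) else 0) =
      ∑ T : TypeBTableau (a + 2 + m),
      (if T.west ⟨a, h1⟩ = true ∧ T.west ⟨a + 1, h2⟩ = true then (1:ℝ) else 0) *
        (1 : ℝ) ^ U T := by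
    refine Finset.sum_congr rfl fun T _ => by rw [one_pow, mul_one]
  rw [hstep, S2_chain a m 1, S2_base a (1 + (m : ℝ))]
  rw [card_eq_Gs]
  simp only [Gs_eq]
  have cm : (∏ i ∈ Finset.range m, (2 * (1 + (i:ℝ)))) =
      2 ^ m * ∏ i ∈ Finset.range m, (1 + (i:ℝ)) := by
    rw [Finset.prod_mul_distrib, Finset.prod_const, Finset.card_range]
  have c1 : (∏ i ∈ Finset.range a, (1 + (1 + (m:ℝ)) + (i:ℝ))) =
      ∏ i ∈ Finset.range a, (1 + (m:ℝ) + 1 + (i:ℝ)) :=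
    Finset.prod_congr rfl fun i _ => by ring
  have c2 : (∏ i ∈ Finset.range a, (1 + (1 + (1 + (m:ℝ))) + (i:ℝ))) =
      ∏ i ∈ Finset.range a, (1 + (m:ℝ) + 1 + 1 + (i:ℝ)) :=
    Finset.prod_congr rfl fun i _ => by ring
  have r1 := prod_shift (1 + (m:ℝ)) a
  have r2 := prod_shift (1 + (m:ℝ) + 1) a
  have hn2 : a + 2 + m = (m + 1) + (a + 1) := by omega
  have rN : (∏ i ∈ Finset.range (a + 2 + m), (1 + (i:ℝ))) =
      (∏ i ∈ Finset.range m, (1 + (i:ℝ))) * (1 + (m:ℝ)) *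
        ((∏ i ∈ Finset.range a, (1 + (m:ℝ) + 1 + (i:ℝ))) * (1 + (m:ℝ) + 1 + (a:ℝ))) := by
    rw [hn2, Finset.prod_range_add, Finset.prod_range_succ]
    have hconv : ∏ i ∈ Finset.range (a + 1), ((1:ℝ) + ((m + 1 + i : ℕ) : ℝ)) =
        ∏ i ∈ Finset.range (a + 1), (1 + (m:ℝ) + 1 + (i:ℝ)) :=
      Finset.prod_congr rfl fun i _ => by push_cast; ring
    rw [hconv, Finset.prod_range_succ]
  rw [cm, c1, c2, rN]
  have hm1 : (1:ℝ) + (m:ℝ) ≠ 0 := by positivity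
  have hm2 : (1:ℝ) + (m:ℝ) + 1 ≠ 0 := by positivity
  have hd1 : (a:ℝ) + 2 + (m:ℝ) ≠ 0 := by positivity
  have hd2 : (a:ℝ) + 2 + (m:ℝ) - 1 ≠ 0 := by
    have : (a:ℝ) + 2 + (m:ℝ) - 1 = (a:ℝ) + (m:ℝ) + 1 := by ring
    rw [this]; positivity
  have hB : (∏ i ∈ Finset.range a, (1 + (m:ℝ) + 1 + (i:ℝ))) =
      (1 + (m:ℝ) + (a:ℝ)) * (∏ i ∈ Finset.range a, (1 + (m:ℝ) + (i:ℝ))) / (1 + (m:ℝ)) := by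
    field_simp
    linear_combination r1
  have hC : (∏ i ∈ Finset.range a, (1 + (m:ℝ) + 1 + 1 + (i:ℝ))) =
      (1 + (m:ℝ) + 1 + (a:ℝ)) * (∏ i ∈ Finset.range a, (1 + (m:ℝ) + 1 + (i:ℝ))) /
        (1 + (m:ℝ) + 1) := by
    field_simp
    linear_combination r2
  rw [hC, hB]
  have hpow : (2:ℝ) ^ (a + 2 + m) = 2 ^ a * 4 * 2 ^ m := by
    rw [pow_add, pow_add]; norm_num
  rw [hpow]
  field_simp
  ring

end TypeBAux


/-- The number of type-B permutation tableaux of size `n` whose `(k-1)`-th and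
`k`-th border steps are both west steps equals
`(k/n - 3/(2n) + (n-k+1)²/(4n(n-1))) · |B_n|`; i.e. for a uniformly random
type-B permutation tableau of size `n`, the probability that steps `k-1` and `k`
are both west is `k/n - 3/(2n) + (n-k+1)²/(4n(n-1))`. -/
theorem expected_adjacent_west_steps (n k : ℕ) (hn : 2 ≤ n) (hk : 2 ≤ k) (hkn : k ≤ n) :
    ((Finset.univ.filter (fun T : TypeBTableau n =>
        T.west ⟨k - 2, by omega⟩ = true ∧ T.west ⟨k - 1, by omega⟩ = true)).card : ℝ) =
      ((k : ℝ) / (n : ℝ) - 3 / (2 * (n : ℝ)) +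
        ((n : ℝ) - (k : ℝ) + 1) ^ 2 / (4 * (n : ℝ) * ((n : ℝ) - 1))) *
        (Fintype.card (TypeBTableau n) : ℝ) := by
  obtain ⟨a, rfl⟩ : ∃ a, k = a + 2 := ⟨k - 2, by omega⟩
  obtain ⟨m, rfl⟩ : ∃ m, n = a + 2 + m := ⟨n - (a + 2), by omega⟩
  exact TypeBAux.final_count a m (by omega) (by omega)
end

section
/- For every integer n ≥ 2, the sum over all type-B permutation tableaux T of size n of the number of indices k with 2 ≤ k ≤ n such that the (k-1)-th and k-th border steps of T are both west steps equals ((14n-25)/24 + 1/(2n))·|B_n|; equivalently, the expected number of pairs of adjacent west steps in a uniformly random type-B permutation tableau of size n is (14n-25)/24 + 1/(2n). -/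
open Finset

/-- The number of pairs of adjacent west steps of a type-B permutation tableau,
i.e. the number of indices `k` with `2 ≤ k ≤ n` such that the `(k-1)`-th and the
`k`-th border steps are both west steps (encoded as pairs of consecutive
step indices that are both west). -/
def TypeBTableau.adjWest {n : ℕ} (T : TypeBTableau n) : ℕ :=
  (Finset.univ.filter (fun p : Fin n × Fin n =>
      (p.1 : ℕ) + 1 = (p.2 : ℕ) ∧ T.west p.1 = true ∧ T.west p.2 = true)).card

namespace TypeBTableau

theorem ext' {n : ℕ} {T₁ T₂ : TypeBTableau n} (hw : T₁.west = T₂.west)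
    (hf : T₁.filling = T₂.filling) : T₁ = T₂ := by
  cases T₁; cases T₂; simp_all

variable {n : ℕ}

/-- `(r, c)` is a cell of the shifted diagram. -/
def IsCell (T : TypeBTableau n) (r c : Fin n) : Prop :=
  T.west c = true ∧
    ((T.west r = false ∧ (r : ℕ) < (c : ℕ)) ∨ (T.west r = true ∧ (r : ℕ) ≤ (c : ℕ)))

/-- Row `r'` is strictly above row `r`. -/
def Above (T : TypeBTableau n) (r' r : Fin n) : Prop :=
  (T.west r' = true ∧ T.west r = false) ∨
  (T.west r' = true ∧ T.west r = true ∧ (r : ℕ) < (r' : ℕ)) ∨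
  (T.west r' = false ∧ T.west r = false ∧ (r' : ℕ) < (r : ℕ))

/-- A row is free if it is alive (a west row has a 1 in its diagonal cell) and
unrestricted (no 0 of the row has a 1 above it). -/
def Free (T : TypeBTableau n) (r : Fin n) : Prop :=
  (T.west r = true → T.filling r r = true) ∧
  ∀ c, IsCell T r c → T.filling r c = false → ∀ r', Above T r' r → T.filling r' c = false

open scoped Classical in
noncomputable def FreeSet (T : TypeBTableau n) : Finset (Fin n) :=
  univ.filter (fun r => Free T r)

noncomputable def V (T : TypeBTableau n) : ℕ := (FreeSet T).card

/-- Extension by a south step. -/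
def extS (T : TypeBTableau n) : TypeBTableau (n + 1) where
  west := Fin.snoc T.west false
  filling := fun r c =>
    Fin.lastCases false (fun r0 => Fin.lastCases false (fun c0 => T.filling r0 c0) c) r
  support := by
    intro r c h
    rcases Fin.eq_castSucc_or_eq_last r with ⟨r0, rfl⟩ | rfl
    · rcases Fin.eq_castSucc_or_eq_last c with ⟨c0, rfl⟩ | rfl
      · simp only [Fin.lastCases_castSucc] at h
        obtain ⟨h1, h2⟩ := T.support r0 c0 h
        simp only [Fin.snoc_castSucc, Fin.coe_castSucc]
        exact ⟨h1, h2⟩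
      · simp only [Fin.lastCases_castSucc, Fin.lastCases_last] at h
        exact absurd h (by simp)
    · simp only [Fin.lastCases_last] at h
      exact absurd h (by simp)
  col_one := by
    intro c hc
    rcases Fin.eq_castSucc_or_eq_last c with ⟨c0, rfl⟩ | rfl
    · rw [Fin.snoc_castSucc] at hc
      obtain ⟨r0, hr0⟩ := T.col_one c0 hc
      exact ⟨r0.castSucc, by simpa using hr0⟩
    · rw [Fin.snoc_last] at hc; exact absurd hc (by simp)
  no_bad_zero := by
    intro r c hcell hzero ⟨⟨r', habove, hr'⟩, ⟨c', hcc', hc'⟩⟩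
    rcases Fin.eq_castSucc_or_eq_last c with ⟨c0, rfl⟩ | rfl
    · rcases Fin.eq_castSucc_or_eq_last r with ⟨r0, rfl⟩ | rfl
      · rcases Fin.eq_castSucc_or_eq_last r' with ⟨r1, rfl⟩ | rfl
        · rcases Fin.eq_castSucc_or_eq_last c' with ⟨c1, rfl⟩ | rfl
          · simp only [Fin.lastCases_castSucc] at hzero hr' hc'
            simp only [Fin.snoc_castSucc, Fin.coe_castSucc] at hcell habove hcc'
            exact T.no_bad_zero r0 c0 hcell hzero ⟨⟨r1, habove, hr'⟩, ⟨c1, hcc', hc'⟩⟩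
          · simp only [Fin.lastCases_castSucc, Fin.lastCases_last] at hc'
            exact absurd hc' (by simp)
        · simp only [Fin.lastCases_last] at hr'
          exact absurd hr' (by simp)
      · -- r = last : not a cell
        simp only [Fin.snoc_castSucc, Fin.snoc_last, Fin.val_last, Fin.coe_castSucc] at hcell
        rcases hcell.2 with ⟨_, hlt⟩ | ⟨hw, _⟩
        · omega
        · exact absurd hw (by simp)
    · -- c = last : west last = false, not a column
      rw [Fin.snoc_last] at hcell
      exact absurd hcell.1 (by simp)
  diag_zero := by
    intro j hj hjj c
    rcases Fin.eq_castSucc_or_eq_last j with ⟨j0, rfl⟩ | rfl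
    · rw [Fin.snoc_castSucc] at hj
      simp only [Fin.lastCases_castSucc] at hjj
      rcases Fin.eq_castSucc_or_eq_last c with ⟨c0, rfl⟩ | rfl
      · simp only [Fin.lastCases_castSucc]
        exact T.diag_zero j0 hj hjj c0
      · simp [Fin.lastCases_castSucc, Fin.lastCases_last]
    · rw [Fin.snoc_last] at hj; exact absurd hj (by simp)

/-- Extension by a west step, with new-column entries `a`. -/
def extW (T : TypeBTableau n) (a : Fin (n + 1) → Bool)
    (ha1 : ∀ r : Fin n, a r.castSucc = true → Free T r)
    (ha2 : ∃ r, a r = true) : TypeBTableau (n + 1) where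
  west := Fin.snoc T.west true
  filling := fun r c =>
    Fin.lastCases (a r) (fun c0 => Fin.lastCases false (fun r0 => T.filling r0 c0) r) c
  support := by
    intro r c h
    rcases Fin.eq_castSucc_or_eq_last c with ⟨c0, rfl⟩ | rfl
    · rcases Fin.eq_castSucc_or_eq_last r with ⟨r0, rfl⟩ | rfl
      · simp only [Fin.lastCases_castSucc] at h
        obtain ⟨h1, h2⟩ := T.support r0 c0 h
        simp only [Fin.snoc_castSucc, Fin.coe_castSucc]
        exact ⟨h1, h2⟩
      · simp only [Fin.lastCases_castSucc, Fin.lastCases_last] at h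
        exact absurd h (by simp)
    · refine ⟨by simp, ?_⟩
      rcases Fin.eq_castSucc_or_eq_last r with ⟨r0, rfl⟩ | rfl
      · rcases hw : T.west r0 with _ | _
        · exact Or.inl ⟨by simp [hw], by simp [Fin.lt_def, r0.isLt]⟩
        · exact Or.inr ⟨by simp [hw], by simp [Nat.le_of_lt_succ r0.castSucc.isLt]⟩
      · exact Or.inr ⟨by simp, le_refl _⟩
  col_one := by
    intro c hc
    rcases Fin.eq_castSucc_or_eq_last c with ⟨c0, rfl⟩ | rfl
    · rw [Fin.snoc_castSucc] at hc
      obtain ⟨r0, hr0⟩ := T.col_one c0 hc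
      exact ⟨r0.castSucc, by simpa using hr0⟩
    · obtain ⟨r, hr⟩ := ha2
      exact ⟨r, by simpa using hr⟩
  no_bad_zero := by
    intro r c hcell hzero ⟨⟨r', habove, hr'⟩, ⟨c', hcc', hc'⟩⟩
    rcases Fin.eq_castSucc_or_eq_last c with ⟨c0, rfl⟩ | rfl
    · rcases Fin.eq_castSucc_or_eq_last r with ⟨r0, rfl⟩ | rfl
      · rcases Fin.eq_castSucc_or_eq_last r' with ⟨r1, rfl⟩ | rfl
        · -- above witness is an old row
          simp only [Fin.lastCases_castSucc] at hzero hr'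
          simp only [Fin.snoc_castSucc, Fin.coe_castSucc] at hcell habove
          rcases Fin.eq_castSucc_or_eq_last c' with ⟨c1, rfl⟩ | rfl
          · simp only [Fin.lastCases_castSucc] at hc'
            simp only [Fin.coe_castSucc] at hcc'
            exact T.no_bad_zero r0 c0 hcell hzero ⟨⟨r1, habove, hr'⟩, ⟨c1, hcc', hc'⟩⟩
          · -- the 1 to the left is in the new column: row r0 is free, contradiction
            simp only [Fin.lastCases_last] at hc'
            have hfree := ha1 r0 hc'
            have := hfree.2 c0 hcell hzero r1 habove
            rw [this] at hr'; exact absurd hr' (by simp)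
        · simp only [Fin.lastCases_castSucc, Fin.lastCases_last] at hr'
          exact absurd hr' (by simp)
      · -- r = last with old column: not a cell
        simp only [Fin.snoc_last, Fin.coe_castSucc, Fin.val_last] at hcell
        rcases hcell.2 with ⟨hw, _⟩ | ⟨_, hle⟩
        · exact absurd hw (by simp)
        · have := c0.isLt; omega
    · -- c = last : nothing to the left
      have := hcc'
      have hlt : (c' : ℕ) < n + 1 := c'.isLt
      simp only [Fin.val_last] at this
      omega
  diag_zero := by
    intro j hj hjj c
    rcases Fin.eq_castSucc_or_eq_last j with ⟨j0, rfl⟩ | rfl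
    · rw [Fin.snoc_castSucc] at hj
      simp only [Fin.lastCases_castSucc] at hjj
      rcases Fin.eq_castSucc_or_eq_last c with ⟨c0, rfl⟩ | rfl
      · simp only [Fin.lastCases_castSucc]
        exact T.diag_zero j0 hj hjj c0
      · simp only [Fin.lastCases_last]
        by_contra h
        have ha := ha1 j0 (by revert h; cases a j0.castSucc <;> simp)
        exact absurd (ha.1 hj) (by simp [hjj])
    · simp only [Fin.lastCases_last] at hjj
      rcases Fin.eq_castSucc_or_eq_last c with ⟨c0, rfl⟩ | rfl
      · simp [Fin.lastCases_castSucc, Fin.lastCases_last]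
      · simpa using hjj

end TypeBTableau

namespace TypeBTableau
open Finset
variable {n : ℕ}

/-- Restriction: forget the last step. -/
def restrict (T : TypeBTableau (n + 1)) : TypeBTableau n where
  west := fun r => T.west r.castSucc
  filling := fun r c => T.filling r.castSucc c.castSucc
  support := by
    intro r c h
    obtain ⟨h1, h2⟩ := T.support r.castSucc c.castSucc h
    simpa using ⟨h1, h2⟩
  col_one := by
    intro c hc
    obtain ⟨r, hr⟩ := T.col_one c.castSucc hc
    have hsup := T.support r c.castSucc hr
    have hrn : (r : ℕ) < n := by
      rcases hsup.2 with ⟨_, hlt⟩ | ⟨_, hle⟩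
      · simp only [Fin.coe_castSucc] at hlt; have := c.isLt; omega
      · simp only [Fin.coe_castSucc] at hle; have := c.isLt; omega
    exact ⟨⟨r, hrn⟩, by
      have : (⟨(r:ℕ), hrn⟩ : Fin n).castSucc = r := by ext; simp
      show T.filling (⟨(r:ℕ), hrn⟩ : Fin n).castSucc c.castSucc = true
      rw [this]; exact hr⟩
  no_bad_zero := by
    intro r c hcell hzero ⟨⟨r', habove, hr'⟩, ⟨c', hcc', hc'⟩⟩
    refine T.no_bad_zero r.castSucc c.castSucc (by simpa using hcell) hzero
      ⟨⟨r'.castSucc, by simpa using habove, hr'⟩, ⟨c'.castSucc, by simpa using hcc', hc'⟩⟩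
  diag_zero := by
    intro j hj hjj c
    exact T.diag_zero j.castSucc hj hjj c.castSucc

end TypeBTableau

namespace TypeBTableau
open Finset
variable {n : ℕ}

@[simp] lemma extS_west_castSucc (T : TypeBTableau n) (r : Fin n) :
    (extS T).west r.castSucc = T.west r := by simp [extS]
@[simp] lemma extS_west_last (T : TypeBTableau n) :
    (extS T).west (Fin.last n) = false := by simp [extS]
@[simp] lemma extS_filling_cc (T : TypeBTableau n) (r c : Fin n) :
    (extS T).filling r.castSucc c.castSucc = T.filling r c := by simp [extS]
@[simp] lemma extS_filling_last_row (T : TypeBTableau n) (c : Fin (n+1)) :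
    (extS T).filling (Fin.last n) c = false := by simp [extS]
@[simp] lemma extS_filling_last_col (T : TypeBTableau n) (r : Fin (n+1)) :
    (extS T).filling r (Fin.last n) = false := by
  rcases Fin.eq_castSucc_or_eq_last r with ⟨r0, rfl⟩ | rfl <;> simp [extS]

@[simp] lemma extW_west_castSucc (T : TypeBTableau n) (a ha1 ha2) (r : Fin n) :
    (extW T a ha1 ha2).west r.castSucc = T.west r := by simp [extW]
@[simp] lemma extW_west_last (T : TypeBTableau n) (a ha1 ha2) :
    (extW T a ha1 ha2).west (Fin.last n) = true := by simp [extW]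
@[simp] lemma extW_filling_cc (T : TypeBTableau n) (a ha1 ha2) (r c : Fin n) :
    (extW T a ha1 ha2).filling r.castSucc c.castSucc = T.filling r c := by simp [extW]
@[simp] lemma extW_filling_newcol (T : TypeBTableau n) (a ha1 ha2) (r : Fin (n+1)) :
    (extW T a ha1 ha2).filling r (Fin.last n) = a r := by simp [extW]
@[simp] lemma extW_filling_last_row (T : TypeBTableau n) (a ha1 ha2) (c : Fin n) :
    (extW T a ha1 ha2).filling (Fin.last n) c.castSucc = false := by simp [extW]

@[simp] lemma restrict_extS (T : TypeBTableau n) : restrict (extS T) = T := by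
  refine ext' (funext fun r => ?_) (funext fun r => funext fun c => ?_) <;> simp [restrict]

@[simp] lemma restrict_extW (T : TypeBTableau n) (a ha1 ha2) :
    restrict (extW T a ha1 ha2) = T := by
  refine ext' (funext fun r => ?_) (funext fun r => funext fun c => ?_) <;> simp [restrict]

lemma extS_restrict (T' : TypeBTableau (n+1)) (h : T'.west (Fin.last n) = false) :
    extS (restrict T') = T' := by
  refine ext' (funext fun r => ?_) (funext fun r => funext fun c => ?_)
  · rcases Fin.eq_castSucc_or_eq_last r with ⟨r0, rfl⟩ | rfl
    · simp [restrict]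
    · simp [h]
  · rcases Fin.eq_castSucc_or_eq_last c with ⟨c0, rfl⟩ | rfl
    · rcases Fin.eq_castSucc_or_eq_last r with ⟨r0, rfl⟩ | rfl
      · simp [restrict]
      · -- row last has no cells (it is a south row below everything)
        rcases hf : T'.filling (Fin.last n) c0.castSucc with _ | _
        · simp
        · have hsup := T'.support _ _ hf
          rcases hsup.2 with ⟨_, hlt⟩ | ⟨hw, _⟩
          · simp only [Fin.val_last, Fin.coe_castSucc] at hlt
            have := c0.isLt; omega
          · rw [hw] at h; exact absurd h (by simp)
    · -- column last is not a column
      rcases hf : T'.filling r (Fin.last n) with _ | _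
      · simp
      · have hsup := T'.support _ _ hf
        rw [hsup.1] at h; exact absurd h (by simp)

/-- Data of a west-extension: the diagonal entry and the set of free rows getting a 1. -/
noncomputable def validExts (T : TypeBTableau n) : Finset (Bool × Finset (Fin n)) :=
  (univ ×ˢ (FreeSet T).powerset).filter (fun p => p.1 = true ∨ p.2.Nonempty)

def mkA (d : Bool) (s : Finset (Fin n)) : Fin (n+1) → Bool :=
  Fin.snoc (fun r => decide (r ∈ s)) d

@[simp] lemma mkA_castSucc (d : Bool) (s : Finset (Fin n)) (r : Fin n) :
    mkA d s r.castSucc = decide (r ∈ s) := by simp [mkA]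
@[simp] lemma mkA_last (d : Bool) (s : Finset (Fin n)) :
    mkA d s (Fin.last n) = d := by simp [mkA]

lemma mem_FreeSet {T : TypeBTableau n} {r : Fin n} : r ∈ FreeSet T ↔ Free T r := by
  classical simp [FreeSet]

lemma validExts_prop1 {T : TypeBTableau n} {p : Bool × Finset (Fin n)}
    (hp : p ∈ validExts T) : ∀ r : Fin n, mkA p.1 p.2 r.castSucc = true → Free T r := by
  intro r hr
  simp only [mkA_castSucc, decide_eq_true_eq] at hr
  have hsub : p.2 ⊆ FreeSet T := by
    have := (Finset.mem_filter.mp hp).1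
    exact Finset.mem_powerset.mp (Finset.mem_product.mp this).2
  exact mem_FreeSet.mp (hsub hr)

lemma validExts_prop2 {T : TypeBTableau n} {p : Bool × Finset (Fin n)}
    (hp : p ∈ validExts T) : ∃ r, mkA p.1 p.2 r = true := by
  rcases (Finset.mem_filter.mp hp).2 with hd | ⟨r, hr⟩
  · exact ⟨Fin.last n, by simp [hd]⟩
  · exact ⟨r.castSucc, by simp [hr]⟩

lemma extW_restrict (T' : TypeBTableau (n+1)) (h : T'.west (Fin.last n) = true)
    (ha1 ha2) :
    extW (restrict T') (mkA (T'.filling (Fin.last n) (Fin.last n))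
      (univ.filter (fun r : Fin n => T'.filling r.castSucc (Fin.last n) = true))) ha1 ha2 = T' := by
  refine ext' (funext fun r => ?_) (funext fun r => funext fun c => ?_)
  · rcases Fin.eq_castSucc_or_eq_last r with ⟨r0, rfl⟩ | rfl
    · simp [restrict]
    · simp [h]
  · rcases Fin.eq_castSucc_or_eq_last c with ⟨c0, rfl⟩ | rfl
    · rcases Fin.eq_castSucc_or_eq_last r with ⟨r0, rfl⟩ | rfl
      · simp [restrict]
      · -- row last has only the diagonal cell
        rw [extW_filling_last_row]
        rcases hf : T'.filling (Fin.last n) c0.castSucc with _ | _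
        · rfl
        · have hsup := T'.support _ _ hf
          rcases hsup.2 with ⟨hw, _⟩ | ⟨_, hle⟩
          · rw [hw] at h; exact absurd h (by simp)
          · simp only [Fin.val_last, Fin.coe_castSucc] at hle
            have := c0.isLt; omega
    · rw [extW_filling_newcol]
      rcases Fin.eq_castSucc_or_eq_last r with ⟨r0, rfl⟩ | rfl
      · simp only [mkA_castSucc, Finset.mem_filter, Finset.mem_univ, true_and]
        rcases hf : T'.filling r0.castSucc (Fin.last n) with _ | _ <;> simp [hf]
      · simp

end TypeBTableau

namespace TypeBTableau
open Finset
variable {n : ℕ}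

lemma free_of_one_in_lastcol (T' : TypeBTableau (n+1)) (r : Fin n)
    (hr : T'.filling r.castSucc (Fin.last n) = true) : Free (restrict T') r := by
  constructor
  · intro hw
    by_contra hd
    have hd' : T'.filling r.castSucc r.castSucc = false := by
      revert hd; unfold restrict; cases T'.filling r.castSucc r.castSucc <;> simp
    have := T'.diag_zero r.castSucc hw hd' (Fin.last n)
    rw [this] at hr; exact absurd hr (by simp)
  · intro c hcell hzero r'' habove
    by_contra hfill
    have hfill' : T'.filling r''.castSucc c.castSucc = true := by
      revert hfill; unfold restrict; cases T'.filling r''.castSucc c.castSucc <;> simp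
    refine T'.no_bad_zero r.castSucc c.castSucc (by simpa [restrict, IsCell] using hcell) hzero
      ⟨⟨r''.castSucc, by simpa [restrict, Above] using habove, hfill'⟩,
       ⟨Fin.last n, by simp [Fin.lt_def, c.isLt], hr⟩⟩

noncomputable def ExtData (T : TypeBTableau n) : Type := Option {p // p ∈ validExts T}

noncomputable instance (T : TypeBTableau n) : Fintype (ExtData T) :=
  instFintypeOption (α := {p // p ∈ validExts T})

noncomputable def glue : (Σ T : TypeBTableau n, ExtData T) → TypeBTableau (n+1) :=
  fun x => match x with
  | ⟨T, none⟩ => extS T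
  | ⟨T, some p⟩ => extW T (mkA p.1.1 p.1.2) (validExts_prop1 p.2) (validExts_prop2 p.2)

lemma glue_bijective : Function.Bijective (glue (n := n)) := by
  constructor
  · rintro ⟨T₁, (_ | p₁)⟩ ⟨T₂, (_ | p₂)⟩ h
    · have hT : T₁ = T₂ := by
        have := congrArg restrict h; simpa [glue] using this
      subst hT; rfl
    · exfalso
      have := congrArg (fun T' => T'.west (Fin.last n)) h
      simp [glue] at this
    · exfalso
      have := congrArg (fun T' => T'.west (Fin.last n)) h
      simp [glue] at this
    · have hT : T₁ = T₂ := by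
        have := congrArg restrict h; simpa [glue] using this
      subst hT
      have hfun : mkA p₁.1.1 p₁.1.2 = mkA p₂.1.1 p₂.1.2 := by
        have := congrArg (fun T' => fun r => T'.filling r (Fin.last n)) h
        simpa [glue] using this
      have hd : p₁.1.1 = p₂.1.1 := by
        have := congrFun hfun (Fin.last n); simpa using this
      have hs : p₁.1.2 = p₂.1.2 := by
        ext r
        have := congrFun hfun r.castSucc
        simpa using this
      have : p₁ = p₂ := Subtype.ext (Prod.ext hd hs)
      rw [this]
  · intro T'
    rcases hw : T'.west (Fin.last n) with _ | _
    · exact ⟨⟨restrict T', none⟩, extS_restrict T' hw⟩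
    · have hmem : (T'.filling (Fin.last n) (Fin.last n),
          univ.filter (fun r : Fin n => T'.filling r.castSucc (Fin.last n) = true))
          ∈ validExts (restrict T') := by
        refine Finset.mem_filter.mpr ⟨Finset.mem_product.mpr ⟨Finset.mem_univ _, ?_⟩, ?_⟩
        · refine Finset.mem_powerset.mpr (fun r hr => ?_)
          simp only [Finset.mem_filter, Finset.mem_univ, true_and] at hr
          exact mem_FreeSet.mpr (free_of_one_in_lastcol T' r hr)
        · obtain ⟨r, hr⟩ := T'.col_one (Fin.last n) hw
          rcases Fin.eq_castSucc_or_eq_last r with ⟨r0, rfl⟩ | rfl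
          · exact Or.inr ⟨r0, by simp [hr]⟩
          · exact Or.inl hr
      exact ⟨⟨restrict T', some ⟨_, hmem⟩⟩,
        extW_restrict T' hw (validExts_prop1 hmem) (validExts_prop2 hmem)⟩

lemma master_sum (F : TypeBTableau (n+1) → ℝ) :
    ∑ T' : TypeBTableau (n+1), F T' =
      ∑ T : TypeBTableau n, (F (extS T) +
        ∑ p : {p // p ∈ validExts T},
          F (extW T (mkA p.1.1 p.1.2) (validExts_prop1 p.2) (validExts_prop2 p.2))) := by
  rw [← Fintype.sum_bijective glue glue_bijective _ F (fun _ => rfl)]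
  rw [← Finset.univ_sigma_univ, Finset.sum_sigma]
  refine Fintype.sum_congr _ _ (fun T => ?_)
  exact Fintype.sum_option (fun s => F (glue ⟨T, s⟩))

end TypeBTableau

namespace TypeBTableau
open Finset
variable {n : ℕ}

def ordKey (T : TypeBTableau n) (r : Fin n) : ℕ :=
  if T.west r = true then n - 1 - (r : ℕ) else n + (r : ℕ)

lemma above_iff_ordKey {T : TypeBTableau n} {r' r : Fin n} :
    Above T r' r ↔ ordKey T r' < ordKey T r := by
  have hr := r.isLt; have hr' := r'.isLt
  rcases h1 : T.west r' with _ | _ <;> rcases h2 : T.west r with _ | _ <;>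
    simp [Above, ordKey, h1, h2] <;> omega

lemma ordKey_injective (T : TypeBTableau n) : Function.Injective (ordKey T) := by
  intro a b h
  have ha := a.isLt; have hb := b.isLt
  rcases h1 : T.west a with _ | _ <;> rcases h2 : T.west b with _ | _ <;>
    simp [ordKey, h1, h2] at h <;> exact Fin.ext (by omega)

lemma free_extS_last (T : TypeBTableau n) : Free (extS T) (Fin.last n) := by
  constructor
  · intro h; rw [extS_west_last] at h; exact absurd h (by simp)
  · intro c hcell
    exfalso
    rcases hcell.2 with ⟨_, hlt⟩ | ⟨hw, _⟩
    · simp only [Fin.val_last] at hlt; have := c.isLt; omega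
    · rw [extS_west_last] at hw; exact absurd hw (by simp)

lemma free_extS_castSucc (T : TypeBTableau n) (r : Fin n) :
    Free (extS T) r.castSucc ↔ Free T r := by
  constructor
  · rintro ⟨h1, h2⟩
    constructor
    · intro hw
      have := h1 (by simpa using hw); simpa using this
    · intro c hcell hzero r' hab
      have := h2 c.castSucc
        ⟨by simpa using hcell.1, by simpa using hcell.2⟩
        (by simpa using hzero) r'.castSucc (by simpa [Above] using hab)
      simpa using this
  · rintro ⟨h1, h2⟩
    constructor
    · intro hw
      simp only [extS_west_castSucc] at hw
      simpa using h1 hw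
    · intro c hcell hzero r' hab
      rcases Fin.eq_castSucc_or_eq_last c with ⟨c0, rfl⟩ | rfl
      · rcases Fin.eq_castSucc_or_eq_last r' with ⟨r1, rfl⟩ | rfl
        · simp only [extS_filling_cc]
          refine h2 c0 ⟨by simpa using hcell.1, by simpa using hcell.2⟩
            (by simpa using hzero) r1 (by simpa [Above] using hab)
        · simp
      · exfalso
        have hw := hcell.1
        rw [extS_west_last] at hw; exact absurd hw (by simp)

lemma V_extS (T : TypeBTableau n) : V (extS T) = V T + 1 := by
  classical
  unfold V FreeSet
  rw [Finset.card_filter, Finset.card_filter, Fin.sum_univ_castSucc]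
  congr 1
  · refine Finset.sum_congr rfl (fun r _ => ?_)
    simp [free_extS_castSucc]
  · simp [free_extS_last]

section extW
variable (T : TypeBTableau n) (d : Bool) (s : Finset (Fin n))
  (h1 : ∀ r : Fin n, mkA d s r.castSucc = true → Free T r)
  (h2 : ∃ r, mkA d s r = true)

lemma free_extW_last : Free (extW T (mkA d s) h1 h2) (Fin.last n) ↔ d = true := by
  constructor
  · rintro ⟨ha, _⟩
    have := ha (by simp)
    simpa using this
  · intro hd
    constructor
    · intro _; simp [hd]
    · intro c hcell hzero r' hab
      exfalso
      rcases hab with ⟨_, hw⟩ | ⟨_, _, hlt⟩ | ⟨_, hw, _⟩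
      · rw [extW_west_last] at hw; exact absurd hw (by simp)
      · simp only [Fin.val_last] at hlt; have := r'.isLt; omega
      · rw [extW_west_last] at hw; exact absurd hw (by simp)

lemma isCell_newcol (r : Fin n) :
    (extW T (mkA d s) h1 h2).west (Fin.last n) = true ∧
      (((extW T (mkA d s) h1 h2).west r.castSucc = false ∧ ((r.castSucc : Fin (n+1)) : ℕ) < (Fin.last n : Fin (n+1)).val) ∨
       ((extW T (mkA d s) h1 h2).west r.castSucc = true ∧ ((r.castSucc : Fin (n+1)) : ℕ) ≤ (Fin.last n : Fin (n+1)).val)) := by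
  refine ⟨by simp, ?_⟩
  rcases hw : T.west r with _ | _
  · exact Or.inl ⟨by simp [hw], by simp [r.isLt]⟩
  · exact Or.inr ⟨by simp [hw], by simp [Nat.le_of_lt_succ (Nat.lt_succ_of_lt r.isLt)]⟩

lemma above_last_castSucc (r : Fin n) :
    Above (extW T (mkA d s) h1 h2) (Fin.last n) r.castSucc := by
  rcases hw : T.west r with _ | _
  · exact Or.inl ⟨by simp, by simp [hw]⟩
  · exact Or.inr (Or.inl ⟨by simp, by simp [hw], by simp [r.isLt]⟩)

lemma above_extW_castSucc (r1 r : Fin n) :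
    Above (extW T (mkA d s) h1 h2) r1.castSucc r.castSucc ↔ Above T r1 r := by
  simp [Above]

end extW

section extW2
variable (T : TypeBTableau n) (s : Finset (Fin n))

lemma free_extW_cast_d1 (h1 h2) (hs : s ⊆ FreeSet T) (r : Fin n) :
    Free (extW T (mkA true s) h1 h2) r.castSucc ↔ r ∈ s := by
  constructor
  · rintro ⟨_, hcells⟩
    by_contra hrs
    have hzero : (extW T (mkA true s) h1 h2).filling r.castSucc (Fin.last n) = false := by
      simp [hrs]
    have := hcells (Fin.last n) (isCell_newcol T true s h1 h2 r) hzero (Fin.last n)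
      (above_last_castSucc T true s h1 h2 r)
    simp at this
  · intro hrs
    have hfree : Free T r := mem_FreeSet.mp (hs hrs)
    constructor
    · intro hw
      simp only [extW_west_castSucc] at hw
      simpa using hfree.1 hw
    · intro c hcell hzero r' hab
      rcases Fin.eq_castSucc_or_eq_last c with ⟨c0, rfl⟩ | rfl
      · rcases Fin.eq_castSucc_or_eq_last r' with ⟨r1, rfl⟩ | rfl
        · simp only [extW_filling_cc]
          refine hfree.2 c0 ⟨by simpa using hcell.1, by simpa using hcell.2⟩
            (by simpa using hzero) r1 ((above_extW_castSucc T true s h1 h2 r1 r).mp hab)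
        · simp
      · exfalso
        rw [extW_filling_newcol, mkA_castSucc] at hzero
        simp [hrs] at hzero

lemma free_extW_cast_d0 (h1 h2) (r : Fin n) :
    Free (extW T (mkA false s) h1 h2) r.castSucc ↔
      (Free T r ∧ (r ∈ s ∨ ∀ r1 ∈ s, ¬ Above T r1 r)) := by
  constructor
  · rintro ⟨ha, hcells⟩
    have hfree : Free T r := by
      constructor
      · intro hw
        have := ha (by simpa using hw); simpa using this
      · intro c hcell hzero r1 hab
        have := hcells c.castSucc ⟨by simpa using hcell.1, by simpa using hcell.2⟩
          (by simpa using hzero) r1.castSucc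
          ((above_extW_castSucc T false s h1 h2 r1 r).mpr hab)
        simpa using this
    refine ⟨hfree, ?_⟩
    by_cases hrs : r ∈ s
    · exact Or.inl hrs
    · refine Or.inr (fun r1 hr1 hab => ?_)
      have hzero : (extW T (mkA false s) h1 h2).filling r.castSucc (Fin.last n) = false := by
        simp [hrs]
      have := hcells (Fin.last n) (isCell_newcol T false s h1 h2 r) hzero r1.castSucc
        ((above_extW_castSucc T false s h1 h2 r1 r).mpr hab)
      simp [hr1] at this
  · rintro ⟨hfree, hcond⟩
    constructor
    · intro hw
      simp only [extW_west_castSucc] at hw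
      simpa using hfree.1 hw
    · intro c hcell hzero r' hab
      rcases Fin.eq_castSucc_or_eq_last c with ⟨c0, rfl⟩ | rfl
      · rcases Fin.eq_castSucc_or_eq_last r' with ⟨r1, rfl⟩ | rfl
        · simp only [extW_filling_cc]
          refine hfree.2 c0 ⟨by simpa using hcell.1, by simpa using hcell.2⟩
            (by simpa using hzero) r1 ((above_extW_castSucc T false s h1 h2 r1 r).mp hab)
        · simp
      · rw [extW_filling_newcol, mkA_castSucc] at hzero
        rcases Fin.eq_castSucc_or_eq_last r' with ⟨r1, rfl⟩ | rfl
        · rw [extW_filling_newcol, mkA_castSucc]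
          have hrs : r ∉ s := by simpa using hzero
          rcases hcond with h | h
          · exact absurd h hrs
          · have hab' := (above_extW_castSucc T false s h1 h2 r1 r).mp hab
            by_contra hmem
            have : r1 ∈ s := by simpa using hmem
            exact h r1 this hab'
        · simp

lemma V_extW_d1 (h1 h2) (hs : s ⊆ FreeSet T) :
    V (extW T (mkA true s) h1 h2) = s.card + 1 := by
  classical
  unfold V FreeSet
  rw [Finset.card_filter, Fin.sum_univ_castSucc]
  have hlast : Free (extW T (mkA true s) h1 h2) (Fin.last n) :=
    (free_extW_last T true s h1 h2).mpr rfl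
  rw [if_pos (by simpa using hlast)]
  congr 1
  calc (∑ r : Fin n, if Free (extW T (mkA true s) h1 h2) r.castSucc then 1 else 0)
      = ∑ r : Fin n, if r ∈ s then 1 else 0 := by
        refine Finset.sum_congr rfl (fun r _ => ?_)
        refine if_congr ?_ rfl rfl
        exact free_extW_cast_d1 T s h1 h2 hs r
    _ = s.card := by rw [← Finset.card_filter]; congr 1; ext r; simp

open scoped Classical in
lemma V_extW_d0 (h1 h2) :
    V (extW T (mkA false s) h1 h2) =
      ((FreeSet T).filter (fun r => r ∈ s ∨ ∀ r1 ∈ s, ¬ Above T r1 r)).card := by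
  classical
  unfold V FreeSet
  rw [Finset.card_filter, Fin.sum_univ_castSucc]
  have hlast : ¬ Free (extW T (mkA false s) h1 h2) (Fin.last n) := by
    intro h
    have := (free_extW_last T false s h1 h2).mp h
    simp at this
  rw [if_neg (by simpa using hlast), add_zero]
  rw [Finset.card_filter]
  rw [Finset.sum_filter]
  refine Finset.sum_congr rfl (fun r _ => ?_)
  by_cases h : Free T r ∧ (r ∈ s ∨ ∀ r1 ∈ s, ¬ Above T r1 r)
  · rw [if_pos (by simp [free_extW_cast_d0 T s h1 h2 r, h]), if_pos (by simp [FreeSet, h.1]),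
      if_pos h.2]
  · rw [if_neg (by simp only [free_extW_cast_d0 T s h1 h2 r]; tauto)]
    by_cases h1' : Free T r
    · rw [if_pos (by simp [FreeSet, h1']), if_neg (by tauto)]
    · rw [if_neg (by simp [FreeSet, h1'])]

end extW2

lemma adjWest_sum (T : TypeBTableau n) :
    adjWest T = ∑ p1 : Fin n, ∑ p2 : Fin n,
      (if (p1 : ℕ) + 1 = (p2 : ℕ) ∧ T.west p1 = true ∧ T.west p2 = true then 1 else 0) := by
  classical
  unfold adjWest
  rw [Finset.card_filter]
  exact Fintype.sum_prod_type _

lemma adjWest_extS (T : TypeBTableau n) : adjWest (extS T) = adjWest T := by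
  classical
  rw [adjWest_sum, adjWest_sum, Fin.sum_univ_castSucc]
  have hlast : (∑ p2 : Fin (n+1), if ((Fin.last n : Fin (n+1)) : ℕ) + 1 = (p2 : ℕ) ∧
      (extS T).west (Fin.last n) = true ∧ (extS T).west p2 = true then 1 else 0) = 0 := by
    refine Finset.sum_eq_zero (fun p2 _ => ?_)
    rw [if_neg]; rintro ⟨_, hw, _⟩; rw [extS_west_last] at hw; exact absurd hw (by simp)
  rw [hlast, add_zero]
  refine Finset.sum_congr rfl (fun p1 _ => ?_)
  rw [Fin.sum_univ_castSucc]
  have hlast2 : (if ((p1.castSucc : Fin (n+1)) : ℕ) + 1 = ((Fin.last n : Fin (n+1)) : ℕ) ∧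
      (extS T).west p1.castSucc = true ∧ (extS T).west (Fin.last n) = true then 1 else 0) = 0 := by
    rw [if_neg]; rintro ⟨_, _, hw⟩; rw [extS_west_last] at hw; exact absurd hw (by simp)
  rw [hlast2, add_zero]
  refine Finset.sum_congr rfl (fun p2 _ => ?_)
  refine if_congr ?_ rfl rfl
  simp

lemma adjWest_extW (T : TypeBTableau (n+1)) (a h1 h2) :
    adjWest (extW T a h1 h2) = adjWest T +
      (if T.west (Fin.last n) = true then 1 else 0) := by
  classical
  rw [adjWest_sum, adjWest_sum, Fin.sum_univ_castSucc]
  have hlast : (∑ p2 : Fin (n+2), if ((Fin.last (n+1) : Fin (n+2)) : ℕ) + 1 = (p2 : ℕ) ∧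
      (extW T a h1 h2).west (Fin.last (n+1)) = true ∧ (extW T a h1 h2).west p2 = true
      then 1 else 0) = 0 := by
    refine Finset.sum_eq_zero (fun p2 _ => ?_)
    rw [if_neg]; rintro ⟨hh, _, _⟩
    simp only [Fin.val_last] at hh
    have := p2.isLt; omega
  rw [hlast, add_zero]
  have hsplit : ∀ p1 : Fin (n+1),
      (∑ p2 : Fin (n+2), if ((p1.castSucc : Fin (n+2)) : ℕ) + 1 = (p2 : ℕ) ∧
        (extW T a h1 h2).west p1.castSucc = true ∧ (extW T a h1 h2).west p2 = true
        then 1 else 0)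
      = (∑ p2 : Fin (n+1), if (p1 : ℕ) + 1 = (p2 : ℕ) ∧ T.west p1 = true ∧ T.west p2 = true
          then 1 else 0)
        + (if p1 = Fin.last n ∧ T.west p1 = true then 1 else 0) := by
    intro p1
    rw [Fin.sum_univ_castSucc]
    congr 1
    · refine Finset.sum_congr rfl (fun p2 _ => ?_)
      refine if_congr ?_ rfl rfl
      simp
    · refine if_congr ?_ rfl rfl
      constructor
      · rintro ⟨hh, hw, _⟩
        simp only [Fin.coe_castSucc, Fin.val_last] at hh
        have hp1 : p1 = Fin.last n := Fin.ext (by simpa using hh)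
        rw [extW_west_castSucc] at hw
        exact ⟨hp1, hw⟩
      · rintro ⟨rfl, hw⟩
        exact ⟨by simp, by simpa using hw, by simp⟩
  calc (∑ p1 : Fin (n+1), ∑ p2 : Fin (n+2), if ((p1.castSucc : Fin (n+2)) : ℕ) + 1 = (p2 : ℕ) ∧
        (extW T a h1 h2).west p1.castSucc = true ∧ (extW T a h1 h2).west p2 = true then 1 else 0)
      = ∑ p1 : Fin (n+1), ((∑ p2 : Fin (n+1), if (p1 : ℕ) + 1 = (p2 : ℕ) ∧ T.west p1 = true ∧
          T.west p2 = true then 1 else 0)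
          + (if p1 = Fin.last n ∧ T.west p1 = true then 1 else 0)) :=
        Finset.sum_congr rfl (fun p1 _ => hsplit p1)
    _ = (∑ p1 : Fin (n+1), ∑ p2 : Fin (n+1), if (p1 : ℕ) + 1 = (p2 : ℕ) ∧ T.west p1 = true ∧
          T.west p2 = true then 1 else 0)
          + ∑ p1 : Fin (n+1), (if p1 = Fin.last n ∧ T.west p1 = true then 1 else 0) :=
        Finset.sum_add_distrib
    _ = _ := by
        congr 1
        rw [Finset.sum_eq_single (Fin.last n)]
        · simp
        · intro b _ hb; rw [if_neg]; rintro ⟨rfl, _⟩; exact hb rfl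
        · intro h; exact absurd (Finset.mem_univ _) h

lemma sum_powerset_pow (k : ℕ) (F : Finset (Fin n)) :
    ∑ s ∈ F.powerset, ((k : ℝ)) ^ s.card = ((k : ℝ) + 1) ^ F.card := by
  classical
  induction F using Finset.induction_on with
  | empty => simp
  | @insert a F ha ih =>
    rw [Finset.sum_powerset_insert ha]
    have h2 : ∑ s ∈ F.powerset, ((k:ℝ)) ^ (insert a s).card
        = ∑ s ∈ F.powerset, ((k:ℝ)) * ((k:ℝ)) ^ s.card := by
      refine Finset.sum_congr rfl (fun s hs => ?_)
      have has : a ∉ s := fun h => ha (Finset.mem_powerset.mp hs h)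
      rw [Finset.card_insert_of_notMem has, pow_succ]
      ring
    rw [h2, ← Finset.mul_sum, ih, Finset.card_insert_of_notMem ha, pow_succ]
    ring

open scoped Classical in
lemma sum_powerset_stat (k : ℕ) (ord : Fin n → ℕ) (hinj : Function.Injective ord)
    (F : Finset (Fin n)) :
    ∑ s ∈ F.powerset, (if s.Nonempty then
        ((k : ℝ)) ^ ((F.filter (fun r => r ∈ s ∨ ∀ r1 ∈ s, ¬ ord r1 < ord r)).card) else 0)
      = (k : ℝ) * ((k : ℝ) + 1) ^ F.card - ((k : ℝ)) ^ (F.card + 1) := by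
  classical
  induction F using Finset.strongInduction with
  | _ F ih =>
    rcases Finset.eq_empty_or_nonempty F with rfl | hne
    · simp [Finset.filter_singleton, Finset.not_nonempty_empty]
    · obtain ⟨t, htF, htmin⟩ := Finset.exists_min_image F ord hne
      have hss : F.erase t ⊂ F := Finset.erase_ssubset htF
      set F' := F.erase t with hF'
      have htF' : t ∉ F' := Finset.notMem_erase t F
      have hins : insert t F' = F := Finset.insert_erase htF
      have hmin' : ∀ r ∈ F', ord t < ord r := by
        intro r hr
        have hrF : r ∈ F := (Finset.erase_subset t F) hr
        have hne' : r ≠ t := Finset.ne_of_mem_erase hr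
        have := htmin r hrF
        rcases lt_or_eq_of_le this with h | h
        · exact h
        · exact absurd (hinj h) (Ne.symm hne')
      rw [← hins, Finset.sum_powerset_insert htF']
      -- first sum : t ∉ s
      have hA : ∑ s ∈ F'.powerset, (if s.Nonempty then
          ((k : ℝ)) ^ (((insert t F').filter
            (fun r => r ∈ s ∨ ∀ r1 ∈ s, ¬ ord r1 < ord r)).card) else 0)
          = (k:ℝ) * ((k : ℝ) * ((k : ℝ) + 1) ^ F'.card - ((k : ℝ)) ^ (F'.card + 1)) := by
        rw [← ih F' hss, Finset.mul_sum]
        refine Finset.sum_congr rfl (fun s hs => ?_)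
        by_cases hsne : s.Nonempty
        · rw [if_pos hsne, if_pos hsne]
          have hsub : s ⊆ F' := Finset.mem_powerset.mp hs
          have hpred : (t ∈ s ∨ ∀ r1 ∈ s, ¬ ord r1 < ord t) := by
            refine Or.inr (fun r1 hr1 => ?_)
            have := hmin' r1 (hsub hr1)
            omega
          rw [Finset.filter_insert, if_pos hpred,
            Finset.card_insert_of_notMem (fun h => htF' (Finset.mem_filter.mp h).1),
            pow_succ]
          ring
        · rw [if_neg hsne, if_neg hsne, mul_zero]
      -- second sum : t ∈ s
      have hB : ∑ s ∈ F'.powerset, (if (insert t s).Nonempty then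
          ((k : ℝ)) ^ (((insert t F').filter
            (fun r => r ∈ insert t s ∨ ∀ r1 ∈ insert t s, ¬ ord r1 < ord r)).card) else 0)
          = (k:ℝ) * ((k : ℝ) + 1) ^ F'.card := by
        rw [← sum_powerset_pow k F', Finset.mul_sum]
        refine Finset.sum_congr rfl (fun s hs => ?_)
        have hsub : s ⊆ F' := Finset.mem_powerset.mp hs
        rw [if_pos (Finset.insert_nonempty t s)]
        have hfilt : (insert t F').filter
            (fun r => r ∈ insert t s ∨ ∀ r1 ∈ insert t s, ¬ ord r1 < ord r)
            = insert t s := by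
          ext r
          simp only [Finset.mem_filter, Finset.mem_insert]
          constructor
          · rintro ⟨hrF, hcond | hcond⟩
            · exact hcond
            · -- r has nobody above in insert t s; but t is below everybody except itself
              rcases hrF with rfl | hrF'
              · exact Or.inl rfl
              · exfalso
                exact hcond t (Or.inl rfl) (hmin' r hrF')
          · rintro (rfl | hrs)
            · exact ⟨Or.inl rfl, Or.inl (Or.inl rfl)⟩
            · exact ⟨Or.inr (hsub hrs), Or.inl (Or.inr hrs)⟩
        rw [hfilt, Finset.card_insert_of_notMem (fun h => htF' (hsub h)), pow_succ]
        ring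
      rw [hA, hB, Finset.card_insert_of_notMem htF']
      ring

open scoped Classical in
noncomputable def Vext (T : TypeBTableau n) (p : Bool × Finset (Fin n)) : ℕ :=
  if h : p ∈ validExts T then
    V (extW T (mkA p.1 p.2) (validExts_prop1 h) (validExts_prop2 h)) else 0

open scoped Classical in
lemma sum_validExts (T : TypeBTableau n) (k : ℕ) :
    ∑ p : {p // p ∈ validExts T},
      ((k:ℝ)) ^ (V (extW T (mkA p.1.1 p.1.2) (validExts_prop1 p.2) (validExts_prop2 p.2)))
    = 2 * (k:ℝ) * ((k:ℝ) + 1) ^ (V T) - ((k:ℝ)) ^ (V T + 1) := by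
  have hstep : ∀ p : {p // p ∈ validExts T},
      ((k:ℝ)) ^ (V (extW T (mkA p.1.1 p.1.2) (validExts_prop1 p.2) (validExts_prop2 p.2)))
        = ((k:ℝ)) ^ (Vext T p.1) := by
    intro p; rw [Vext, dif_pos p.2]
  rw [Finset.sum_congr rfl (fun p _ => hstep p)]
  rw [Finset.sum_coe_sort (validExts T) (fun p => ((k:ℝ)) ^ (Vext T p))]
  rw [validExts, Finset.sum_filter, Finset.sum_product]
  rw [Fintype.sum_bool]
  have htrue : ∑ s ∈ (FreeSet T).powerset,
      (if (true = true ∨ s.Nonempty) then ((k:ℝ)) ^ (Vext T (true, s)) else 0)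
      = (k:ℝ) * ((k:ℝ) + 1) ^ (V T) := by
    have : ∀ s ∈ (FreeSet T).powerset,
        (if (true = true ∨ s.Nonempty) then ((k:ℝ)) ^ (Vext T (true, s)) else 0)
        = (k:ℝ) * ((k:ℝ)) ^ s.card := by
      intro s hs
      have hp : (true, s) ∈ validExts T :=
        Finset.mem_filter.mpr ⟨Finset.mem_product.mpr ⟨Finset.mem_univ _, hs⟩, Or.inl rfl⟩
      rw [if_pos (Or.inl rfl), Vext, dif_pos hp,
        V_extW_d1 T s (validExts_prop1 hp) (validExts_prop2 hp) (Finset.mem_powerset.mp hs),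
        pow_succ]
      ring
    rw [Finset.sum_congr rfl this, ← Finset.mul_sum, sum_powerset_pow k (FreeSet T)]
    rfl
  have hfalse : ∑ s ∈ (FreeSet T).powerset,
      (if (false = true ∨ s.Nonempty) then ((k:ℝ)) ^ (Vext T (false, s)) else 0)
      = (k:ℝ) * ((k:ℝ) + 1) ^ (V T) - ((k:ℝ)) ^ (V T + 1) := by
    have : ∀ s ∈ (FreeSet T).powerset,
        (if (false = true ∨ s.Nonempty) then ((k:ℝ)) ^ (Vext T (false, s)) else 0)
        = (if s.Nonempty then
            ((k:ℝ)) ^ (((FreeSet T).filter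
              (fun r => r ∈ s ∨ ∀ r1 ∈ s, ¬ ordKey T r1 < ordKey T r)).card) else 0) := by
      intro s hs
      by_cases hsne : s.Nonempty
      · have hp : (false, s) ∈ validExts T :=
          Finset.mem_filter.mpr ⟨Finset.mem_product.mpr ⟨Finset.mem_univ _, hs⟩, Or.inr hsne⟩
        rw [if_pos (Or.inr hsne), if_pos hsne, Vext, dif_pos hp,
          V_extW_d0 T s (validExts_prop1 hp) (validExts_prop2 hp)]
        congr 2
        refine Finset.filter_congr (fun r _ => ?_)
        constructor
        · rintro (h | h)
          · exact Or.inl h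
          · exact Or.inr (fun r1 hr1 hlt => h r1 hr1 (above_iff_ordKey.mpr hlt))
        · rintro (h | h)
          · exact Or.inl h
          · exact Or.inr (fun r1 hr1 hab => h r1 hr1 (above_iff_ordKey.mp hab))
      · rw [if_neg (by simp [hsne]), if_neg hsne]
    rw [Finset.sum_congr rfl this,
      sum_powerset_stat k (ordKey T) (ordKey_injective T) (FreeSet T)]
    rfl
  rw [htrue, hfalse]
  ring

noncomputable def gS (n k : ℕ) : ℝ := ∑ T : TypeBTableau n, ((k:ℝ)) ^ (V T)

noncomputable def lS (n k : ℕ) : ℝ :=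
  ∑ T : TypeBTableau (n+1), (if T.west (Fin.last n) = true then ((k:ℝ)) ^ (V T) else 0)

noncomputable def hS (n k : ℕ) : ℝ :=
  ∑ T : TypeBTableau n, ((adjWest T : ℝ)) * ((k:ℝ)) ^ (V T)

lemma gS_rec (n k : ℕ) : gS (n+1) k = 2 * (k:ℝ) * gS n (k+1) := by
  rw [gS, master_sum (fun T' => ((k:ℝ)) ^ (V T'))]
  rw [gS, Finset.mul_sum]
  refine Finset.sum_congr rfl (fun T _ => ?_)
  rw [V_extS, sum_validExts T k, pow_succ]
  push_cast
  ring

lemma lS_rec (n k : ℕ) :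
    lS n k = 2 * (k:ℝ) * gS n (k+1) - (k:ℝ) * gS n k := by
  rw [lS, master_sum (fun T' => if T'.west (Fin.last n) = true then ((k:ℝ)) ^ (V T') else 0)]
  rw [gS, gS, Finset.mul_sum, Finset.mul_sum, ← Finset.sum_sub_distrib]
  refine Finset.sum_congr rfl (fun T _ => ?_)
  rw [if_neg (by simp), zero_add]
  have : ∀ p : {p // p ∈ validExts T},
      (if (extW T (mkA p.1.1 p.1.2) (validExts_prop1 p.2) (validExts_prop2 p.2)).west
          (Fin.last n) = true then
        ((k:ℝ)) ^ (V (extW T (mkA p.1.1 p.1.2) (validExts_prop1 p.2) (validExts_prop2 p.2)))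
        else 0)
      = ((k:ℝ)) ^ (V (extW T (mkA p.1.1 p.1.2) (validExts_prop1 p.2) (validExts_prop2 p.2))) := by
    intro p; rw [if_pos (by simp)]
  rw [Finset.sum_congr rfl (fun p _ => this p), sum_validExts T k, pow_succ]
  push_cast
  ring

lemma hS_rec (n k : ℕ) :
    hS (n+2) k = 2 * (k:ℝ) * hS (n+1) (k+1)
      + 2 * (k:ℝ) * lS n (k+1) - (k:ℝ) * lS n k := by
  rw [hS, master_sum (fun T' => ((adjWest T' : ℝ)) * ((k:ℝ)) ^ (V T'))]
  rw [hS, lS, lS, Finset.mul_sum, Finset.mul_sum, Finset.mul_sum]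
  rw [← Finset.sum_add_distrib, ← Finset.sum_sub_distrib]
  refine Finset.sum_congr rfl (fun T _ => ?_)
  have hWterm : ∀ p : {p // p ∈ validExts T},
      ((adjWest (extW T (mkA p.1.1 p.1.2) (validExts_prop1 p.2) (validExts_prop2 p.2)) : ℝ))
        * ((k:ℝ)) ^ (V (extW T (mkA p.1.1 p.1.2) (validExts_prop1 p.2) (validExts_prop2 p.2)))
      = ((adjWest T : ℝ) + (if T.west (Fin.last n) = true then (1:ℝ) else 0))
        * ((k:ℝ)) ^ (V (extW T (mkA p.1.1 p.1.2) (validExts_prop1 p.2) (validExts_prop2 p.2))) := by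
    intro p
    rw [adjWest_extW]
    push_cast
    rcases h : T.west (Fin.last n) with _ | _ <;> simp [h]
  rw [Finset.sum_congr rfl (fun p _ => hWterm p), ← Finset.mul_sum, sum_validExts T k,
    adjWest_extS, V_extS, pow_succ]
  rcases h : T.west (Fin.last n) with _ | _ <;> (push_cast; simp; push_cast; ring)

def empty0 : TypeBTableau 0 where
  west := Fin.elim0
  filling := Fin.elim0
  support := fun r => r.elim0
  col_one := fun c => c.elim0
  no_bad_zero := fun r => r.elim0
  diag_zero := fun j => j.elim0

instance : Unique (TypeBTableau 0) where
  default := empty0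
  uniq := fun T => ext' (funext fun r => r.elim0) (funext fun r => r.elim0)

lemma gS_zero (k : ℕ) : gS 0 k = 1 := by
  rw [gS, Fintype.sum_unique]
  have : V (default : TypeBTableau 0) = 0 := by
    classical
    rw [V, Finset.card_eq_zero]
    exact Finset.eq_empty_of_isEmpty _
  rw [this, pow_zero]

lemma adjWest_one (T : TypeBTableau 1) : adjWest T = 0 := by
  classical
  rw [adjWest, Finset.card_eq_zero, Finset.filter_eq_empty_iff]
  rintro p _ ⟨h, _⟩
  have h1 := p.1.isLt
  have h2 := p.2.isLt
  omega

lemma hS_one (k : ℕ) : hS 1 k = 0 := by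
  rw [hS]
  refine Finset.sum_eq_zero (fun T _ => ?_)
  rw [adjWest_one]
  simp

noncomputable def Qp (m : ℕ) (x : ℝ) : ℝ := ∏ i ∈ Finset.range m, (x + 1 + (i:ℝ))
noncomputable def Rp (m : ℕ) (x : ℝ) : ℝ := ∏ i ∈ Finset.range m, (x + (i:ℝ))

lemma Qp_succ (m : ℕ) (x : ℝ) : Qp (m+1) x = Qp m x * (x + 1 + (m:ℝ)) :=
  Finset.prod_range_succ _ _

lemma Qp_succ' (m : ℕ) (x : ℝ) : Qp (m+1) x = (x + 1) * Qp m (x+1) := by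
  rw [Qp, Finset.prod_range_succ']
  have h1 : ∀ i ∈ Finset.range m, (x + 1 + ((i+1 : ℕ):ℝ)) = ((x+1) + 1 + (i:ℝ)) := by
    intro i _; push_cast; ring
  rw [Finset.prod_congr rfl h1]
  show Qp m (x+1) * (x + 1 + ((0:ℕ):ℝ)) = (x+1) * Qp m (x+1)
  push_cast; ring

lemma Rp_shift (m : ℕ) (x : ℝ) : Rp m (x+1) = Qp m x := by
  rw [Rp, Qp]

lemma Rp_succ' (m : ℕ) (x : ℝ) : Rp (m+1) x = x * Qp m x := by
  rw [Rp, Finset.prod_range_succ']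
  have h1 : ∀ i ∈ Finset.range m, (x + ((i+1 : ℕ):ℝ)) = (x + 1 + (i:ℝ)) := by
    intro i _; push_cast; ring
  rw [Finset.prod_congr rfl h1]
  show Qp m x * (x + ((0:ℕ):ℝ)) = x * Qp m x
  push_cast; ring

lemma gS_closed (n k : ℕ) : gS n k = 2^n * Rp n (k:ℝ) := by
  induction n generalizing k with
  | zero => rw [gS_zero]; simp [Rp]
  | succ n ih =>
    rw [gS_rec, ih (k+1), Rp_succ']
    push_cast
    rw [Rp_shift]
    ring

lemma hS_two (k : ℕ) : hS 2 k = (k:ℝ)^2 + 2*(k:ℝ) := by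
  have h := hS_rec 0 k
  rw [hS_one, lS_rec 0 (k+1), lS_rec 0 k, gS_zero, gS_zero, gS_zero] at h
  rw [h]
  push_cast
  ring

noncomputable def Cp (m : ℕ) (x : ℝ) : ℝ :=
  ((m:ℝ)+2) * (x+(m:ℝ)+1) * (x+(m:ℝ)+2) + ((m:ℝ)+2)^2 * (x+(m:ℝ)+1)
    + ((m:ℝ)+1) * ((m:ℝ)+2) * (2*(m:ℝ)+3) / 6

lemma gS_cA (m k : ℕ) : gS (m+2) k = 2^(m+2) * ((k:ℝ) * ((k:ℝ)+1)) * Qp m ((k:ℝ)+1) := by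
  rw [gS_closed, Rp_succ' (m+1), Qp_succ']
  ring

lemma gS_cB (m k : ℕ) : gS (m+2) (k+1)
    = 2^(m+2) * (((k:ℝ)+1) * ((k:ℝ)+2+(m:ℝ))) * Qp m ((k:ℝ)+1) := by
  rw [gS_closed]
  push_cast
  rw [Rp_shift, Qp_succ', Qp_succ]
  ring

lemma gS_cC (m k : ℕ) : gS (m+2) (k+1+1)
    = 2^(m+2) * (((k:ℝ)+2+(m:ℝ)) * ((k:ℝ)+3+(m:ℝ))) * Qp m ((k:ℝ)+1) := by
  rw [gS_closed]
  push_cast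
  have h : ((k:ℝ)+1+1) = ((k:ℝ)+1)+1 := by ring
  rw [h, Rp_shift, Qp_succ (m+1), Qp_succ]
  push_cast
  ring

lemma hS_closed : ∀ m k : ℕ, hS (m+3) k = 2^(m+1) * (k:ℝ) * Qp m ((k:ℝ)) * Cp m ((k:ℝ)) := by
  intro m
  induction m with
  | zero =>
    intro k
    have h := hS_rec 1 k
    rw [hS_two (k+1), lS_rec 1 (k+1), lS_rec 1 k, gS_rec 0 (k+1+1), gS_rec 0 (k+1),
      gS_rec 0 k, gS_zero, gS_zero, gS_zero] at h
    show hS (1+2) k = _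
    rw [h]
    simp only [Qp, Cp, Finset.range_zero, Finset.prod_empty]
    push_cast
    ring
  | succ m ih =>
    intro k
    have h := hS_rec (m+2) k
    rw [ih (k+1), lS_rec (m+2) (k+1), lS_rec (m+2) k, gS_cA m k, gS_cB m k, gS_cC m k] at h
    show hS (m+2+2) k = _
    rw [h, Qp_succ']
    simp only [Cp]
    push_cast
    ring

lemma sum_adjWest_eq (n : ℕ) :
    (∑ T : TypeBTableau n, ((adjWest T : ℝ))) = hS n 1 := by
  rw [hS]
  refine Finset.sum_congr rfl (fun T _ => ?_)
  norm_num

lemma card_eq_gS (n : ℕ) :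
    ((Fintype.card (TypeBTableau n) : ℝ)) = gS n 1 := by
  have h : gS n 1 = ∑ _T : TypeBTableau n, (1:ℝ) :=
    Finset.sum_congr rfl (fun T _ => by norm_num)
  rw [h, Finset.sum_const, Finset.card_univ]
  simp


end TypeBTableau

open TypeBTableau

/-- The total number of pairs of adjacent west steps over all type-B permutation
tableaux of size `n` equals `((14n-25)/24 + 1/(2n)) · |B_n|`; i.e. the expected
number of pairs of adjacent west steps in a uniformly random type-B permutation
tableau of size `n` is `(14n-25)/24 + 1/(2n)`. -/
theorem expected_number_adjacent_west_steps (n : ℕ) (hn : 2 ≤ n) :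
    (∑ T : TypeBTableau n, (T.adjWest : ℝ)) =
      ((14 * (n : ℝ) - 25) / 24 + 1 / (2 * (n : ℝ))) * (Fintype.card (TypeBTableau n) : ℝ) := by
  rw [sum_adjWest_eq, card_eq_gS]
  rcases eq_or_lt_of_le hn with heq | hlt
  · -- n = 2
    subst heq
    rw [hS_two, gS_closed]
    have : Rp 2 ((1:ℕ):ℝ) = 2 := by
      simp [Rp, Finset.prod_range_succ]
      norm_num
    rw [this]
    norm_num
  · -- n ≥ 3
    obtain ⟨m, rfl⟩ : ∃ m, n = m + 3 := ⟨n - 3, by omega⟩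
    rw [hS_closed m 1, gS_closed]
    rw [show ((m:ℕ)+3) = (m+2)+1 from rfl, Rp_succ' (m+2), Qp_succ (m+1), Qp_succ m]
    have h1 : (((1:ℕ)):ℝ) = 1 := by norm_num
    rw [h1]
    have h6 : ((m:ℝ) + 3) ≠ 0 := by positivity
    simp only [Cp]
    push_cast
    field_simp
    ring
end
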